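/- arXiv:2007.09340 — 2 statements merged into one kernel-verified Lean document; each statement's English description precedes it below -/
import Mathlib

section
/- (Invariance of the language semantics.) For a timed automaton A (reset-point semantics) and any timed automorphism π mapping the configuration c = (p, μ, now) to a configuration with nonnegative components: L(A, π(c)) = π(L(A, c)), where L(A, c) is the set of timed words over which A has an accepting run starting from c. -/
/-- A timed automorphism: a monotone bijection `π : ℝ → ℝ` with `π (x+1) = π x + 1`. -/
def IsTimedAutomorphism (π : ℝ → ℝ) : Prop :=
  Function.Bijective π ∧ StrictMono π ∧ ∀ x : ℝ, π (x + 1) = π x + 1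

/-- An `S`-timed automorphism: a timed automorphism fixing every point of `S`. -/
def IsSTimedAutomorphism (S : Set ℝ) (π : ℝ → ℝ) : Prop :=
  IsTimedAutomorphism π ∧ ∀ t ∈ S, π t = t

/-- A timed word: a finite sequence of letters with nonnegative, nondecreasing timestamps. -/
def IsTimedWord {A : Type*} (w : List (A × ℝ)) : Prop :=
  (∀ p ∈ w, 0 ≤ p.2) ∧ (w.map Prod.snd).Chain' (· ≤ ·)

/-- Pointwise action of a real function on the timestamps of a timed word. -/
def mapTW {A : Type*} (π : ℝ → ℝ) (w : List (A × ℝ)) : List (A × ℝ) :=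
  w.map fun p => (p.1, π p.2)

/-- Comparison operators appearing in clock constraints. -/
inductive CmpOp where
  | lt | le | eq | ge | gt

def CmpOp.holds : CmpOp → ℝ → ℝ → Prop
  | .lt, a, b => a < b
  | .le, a, b => a ≤ b
  | .eq, a, b => a = b
  | .ge, a, b => a ≥ b
  | .gt, a, b => a > b

/-- Clock constraints: Boolean combinations of comparisons of clock values and of
differences of clock values with integer constants. -/
inductive ClockConstraint (X : Type*) where
  | tt : ClockConstraint X
  | ff : ClockConstraint X
  | diff : X → X → CmpOp → ℤ → ClockConstraint X
  | single : X → CmpOp → ℤ → ClockConstraint X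
  | not : ClockConstraint X → ClockConstraint X
  | and : ClockConstraint X → ClockConstraint X → ClockConstraint X
  | or : ClockConstraint X → ClockConstraint X → ClockConstraint X

/-- Satisfaction of a clock constraint by a clock valuation `ν : X → ℝ`. -/
def ClockConstraint.sat {X : Type*} (ν : X → ℝ) : ClockConstraint X → Prop
  | .tt => True
  | .ff => False
  | .diff x y c z => CmpOp.holds c (ν x - ν y) (z : ℝ)
  | .single x c z => CmpOp.holds c (ν x) (z : ℝ)
  | .not φ => ¬ ClockConstraint.sat ν φ
  | .and φ ψ => ClockConstraint.sat ν φ ∧ ClockConstraint.sat ν ψ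
  | .or φ ψ => ClockConstraint.sat ν φ ∨ ClockConstraint.sat ν ψ

/-- All integer constants of the constraint have absolute value at most `m`. -/
def ClockConstraint.constBounded {X : Type*} (m : ℕ) : ClockConstraint X → Prop
  | .tt => True
  | .ff => True
  | .diff _ _ _ z => z.natAbs ≤ m
  | .single _ _ z => z.natAbs ≤ m
  | .not φ => ClockConstraint.constBounded m φ
  | .and φ ψ => ClockConstraint.constBounded m φ ∧ ClockConstraint.constBounded m ψ
  | .or φ ψ => ClockConstraint.constBounded m φ ∧ ClockConstraint.constBounded m ψ

/-- A (nondeterministic) timed automaton over alphabet `A`, locations `Q`, clocks `X`.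
A rule `(p, a, φ, Y, q)` reads letter `a` in location `p`, tests guard `φ`, resets the
clocks in `Y` and moves to location `q`. -/
structure TimedAutomaton (A Q X : Type*) where
  init : Set Q
  final : Set Q
  rules : Set (Q × A × ClockConstraint X × Set X × Q)

/-- A configuration in the reset-point semantics: a location, a reset-point
assignment for the clocks, and the current timestamp. -/
abbrev TAConfig (Q X : Type*) := Q × (X → ℝ) × ℝ

/-- One transition of the reset-point semantics: at time `t ≥ now`, the guard of some
rule is satisfied by the valuation `x ↦ t - μ x`; clocks in the reset set get reset
point `t`, the others keep their reset points. -/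
def TimedAutomaton.Step {A Q X : Type*} (Aut : TimedAutomaton A Q X)
    (c : TAConfig Q X) (e : A × ℝ) (c' : TAConfig Q X) : Prop :=
  c'.2.2 = e.2 ∧ c.2.2 ≤ e.2 ∧
  ∃ φ Y, (c.1, e.1, φ, Y, c'.1) ∈ Aut.rules ∧
    ClockConstraint.sat (fun x => e.2 - c.2.1 x) φ ∧
    (∀ x ∈ Y, c'.2.1 x = e.2) ∧ (∀ x ∉ Y, c'.2.1 x = c.2.1 x)

/-- Runs of a timed automaton over a timed word. -/
inductive TimedAutomaton.Run {A Q X : Type*} (Aut : TimedAutomaton A Q X) :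
    TAConfig Q X → List (A × ℝ) → TAConfig Q X → Prop
  | nil (c : TAConfig Q X) : Aut.Run c [] c
  | cons {c c' c'' : TAConfig Q X} {e : A × ℝ} {w : List (A × ℝ)} :
      Aut.Step c e c' → Aut.Run c' w c'' → Aut.Run c (e :: w) c''

/-- Language of a configuration: timed words admitting an accepting run from it. -/
def TimedAutomaton.LangFrom {A Q X : Type*} (Aut : TimedAutomaton A Q X)
    (c : TAConfig Q X) : Set (List (A × ℝ)) :=
  {w | ∃ c', Aut.Run c w c' ∧ c'.1 ∈ Aut.final}

/-- Language of a timed automaton: union over initial configurations. -/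
def TimedAutomaton.Lang {A Q X : Type*} (Aut : TimedAutomaton A Q X) :
    Set (List (A × ℝ)) :=
  {w | ∃ p ∈ Aut.init, w ∈ Aut.LangFrom (p, fun _ => 0, 0)}

/-- A configuration is reachable if some run from an initial configuration ends in it. -/
def TimedAutomaton.Reachable {A Q X : Type*} (Aut : TimedAutomaton A Q X)
    (c : TAConfig Q X) : Prop :=
  ∃ p ∈ Aut.init, ∃ w, Aut.Run (p, fun _ => 0, 0) w c

/-- Determinism: unique initial location, and two rules from the same location on the
same letter with jointly satisfiable guards agree on resets and target. -/
def TimedAutomaton.IsDeterministic {A Q X : Type*} (Aut : TimedAutomaton A Q X) : Prop :=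
  (∃! p, p ∈ Aut.init) ∧
  ∀ p a φ Y q φ' Y' q', (p, a, φ, Y, q) ∈ Aut.rules → (p, a, φ', Y', q') ∈ Aut.rules →
    (∃ ν : X → ℝ, ClockConstraint.sat ν φ ∧ ClockConstraint.sat ν φ') →
    Y = Y' ∧ q = q'

lemma aut_int_shift {π : ℝ → ℝ} (hπ : IsTimedAutomorphism π) (x : ℝ) (z : ℤ) :
    π (x + z) = π x + z := by
  induction z using Int.induction_on with
  | zero => simp
  | succ n ih =>
      have : x + ((n : ℤ) + 1 : ℤ) = (x + (n : ℤ)) + 1 := by push_cast; ring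
      rw [this, hπ.2.2, ih]; push_cast; ring
  | pred n ih =>
      have h1 : π ((x + (-(n : ℤ) - 1 : ℤ)) + 1) = π (x + (-(n : ℤ) - 1 : ℤ)) + 1 := hπ.2.2 _
      have h2 : (x + (-(n : ℤ) - 1 : ℤ)) + 1 = x + (-(n : ℤ) : ℤ) := by push_cast; ring
      rw [h2, ih] at h1
      have := h1
      push_cast at this ⊢
      linarith

lemma cmp_shift {π : ℝ → ℝ} (hπ : IsTimedAutomorphism π) (c : CmpOp) (a b : ℝ) (z : ℤ) :
    CmpOp.holds c (π a - π b) (z : ℝ) ↔ CmpOp.holds c (a - b) (z : ℝ) := by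
  have hlt : ∀ u v : ℝ, π u < π v ↔ u < v := fun u v => hπ.2.1.lt_iff_lt
  have key : ∀ u v : ℝ, π u - π v < z ↔ u - v < z := by
    intro u v
    have h := aut_int_shift hπ v z
    constructor
    · intro h'
      have h1 : π u < π (v + z) := by rw [h]; linarith
      have := (hlt u (v + z)).1 h1; linarith
    · intro h'
      have h1 : π u < π (v + z) := (hlt u (v + z)).2 (by linarith)
      rw [h] at h1; linarith
  have keygt : ∀ u v : ℝ, (z : ℝ) < π u - π v ↔ (z : ℝ) < u - v := by
    intro u v
    have h := aut_int_shift hπ v z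
    constructor
    · intro h'
      have h1 : π (v + z) < π u := by rw [h]; linarith
      have := (hlt (v + z) u).1 h1; linarith
    · intro h'
      have h1 : π (v + z) < π u := (hlt (v + z) u).2 (by linarith)
      rw [h] at h1; linarith
  have keyeq : ∀ u v : ℝ, π u - π v = z ↔ u - v = z := by
    intro u v
    have h := aut_int_shift hπ v z
    constructor
    · intro h'
      have h1 : π u = π (v + z) := by rw [h]; linarith
      have := hπ.1.1 h1; linarith
    · intro h'
      have h1 : π u = π (v + z) := congrArg π (by linarith)
      rw [h] at h1; linarith
  cases c with
  | lt => exact key a b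
  | le =>
      simp only [CmpOp.holds, ← not_lt]
      exact not_congr (keygt a b)
  | eq => exact keyeq a b
  | ge =>
      simp only [CmpOp.holds, ge_iff_le, ← not_lt]
      exact not_congr (key a b)
  | gt => exact keygt a b

lemma sat_map {X : Type*} {π : ℝ → ℝ} (hπ : IsTimedAutomorphism π) (t : ℝ) (μ : X → ℝ)
    (φ : ClockConstraint X) :
    ClockConstraint.sat (fun x => π t - π (μ x)) φ ↔
      ClockConstraint.sat (fun x => t - μ x) φ := by
  induction φ with
  | tt => simp [ClockConstraint.sat]
  | ff => simp [ClockConstraint.sat]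
  | diff x y c z =>
      simp only [ClockConstraint.sat]
      rw [show (π t - π (μ x)) - (π t - π (μ y)) = π (μ y) - π (μ x) by ring,
        show (t - μ x) - (t - μ y) = μ y - μ x by ring]
      exact cmp_shift hπ c _ _ z
  | single x c z =>
      simp only [ClockConstraint.sat]
      exact cmp_shift hπ c t (μ x) z
  | not φ ih => simp [ClockConstraint.sat, ih]
  | and φ ψ ih1 ih2 => simp [ClockConstraint.sat, ih1, ih2]
  | or φ ψ ih1 ih2 => simp [ClockConstraint.sat, ih1, ih2]

lemma step_map {A Q X : Type*} (Aut : TimedAutomaton A Q X) {π : ℝ → ℝ}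
    (hπ : IsTimedAutomorphism π) {c c' : TAConfig Q X} {e : A × ℝ}
    (h : Aut.Step c e c') :
    Aut.Step (c.1, π ∘ c.2.1, π c.2.2) (e.1, π e.2) (c'.1, π ∘ c'.2.1, π c'.2.2) := by
  obtain ⟨h1, h2, φ, Y, hr, hsat, hres, hkeep⟩ := h
  refine ⟨by simp [h1], hπ.2.1.monotone h2, φ, Y, hr, ?_, ?_, ?_⟩
  · exact (sat_map hπ e.2 c.2.1 φ).2 hsat
  · intro x hx; simp [Function.comp, hres x hx]
  · intro x hx; simp [Function.comp, hkeep x hx]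

lemma run_map {A Q X : Type*} (Aut : TimedAutomaton A Q X) {π : ℝ → ℝ}
    (hπ : IsTimedAutomorphism π) {c c' : TAConfig Q X} {w : List (A × ℝ)}
    (h : Aut.Run c w c') :
    Aut.Run (c.1, π ∘ c.2.1, π c.2.2) (mapTW π w) (c'.1, π ∘ c'.2.1, π c'.2.2) := by
  induction h with
  | nil c => exact TimedAutomaton.Run.nil _
  | cons hs _ ih => exact TimedAutomaton.Run.cons (step_map Aut hπ hs) ih

lemma inv_automorphism {π : ℝ → ℝ} (hπ : IsTimedAutomorphism π) :
    ∃ σ : ℝ → ℝ, IsTimedAutomorphism σ ∧ (∀ x, σ (π x) = x) ∧ (∀ x, π (σ x) = x) := by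
  obtain ⟨σ, hl, hr⟩ := Function.bijective_iff_has_inverse.1 hπ.1
  have hinj : Function.Injective σ := fun a b hab => by
    have := congrArg π hab; rwa [hr, hr] at this
  have hsurj : Function.Surjective σ := fun a => ⟨π a, hl a⟩
  have hmono : StrictMono σ := fun a b hab => by
    have : π (σ a) < π (σ b) := by rwa [hr, hr]
    exact hπ.2.1.lt_iff_lt.1 this
  have hone : ∀ x, σ (x + 1) = σ x + 1 := fun x => by
    apply hπ.1.1
    rw [hr, hπ.2.2, hr]
  exact ⟨σ, ⟨⟨hinj, hsurj⟩, hmono, hone⟩, hl, hr⟩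

/-- Invariance of the language semantics: for a timed automorphism `π` mapping the
configuration `(p, μ, now)` to a configuration with nonnegative components,
`L(A, π(c)) = π(L(A, c))`. -/
theorem lang_invariant_under_timed_automorphism
    {A Q X : Type*} (Aut : TimedAutomaton A Q X)
    (π : ℝ → ℝ) (hπ : IsTimedAutomorphism π)
    (p : Q) (μ : X → ℝ) (now : ℝ)
    (hconf : ∀ x, 0 ≤ μ x ∧ μ x ≤ now)
    (hπμ : ∀ x, 0 ≤ π (μ x)) (hπnow : 0 ≤ π now) :
    Aut.LangFrom (p, π ∘ μ, π now) = mapTW π '' Aut.LangFrom (p, μ, now) := by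
  obtain ⟨σ, hσ, hlσ, hrσ⟩ := inv_automorphism hπ
  ext w
  constructor
  · rintro ⟨c', hrun, hfin⟩
    have := run_map Aut hσ hrun
    simp only at this
    have hμ : (σ ∘ (π ∘ μ)) = μ := by funext x; simp [Function.comp, hlσ]
    have hnow : σ (π now) = now := hlσ now
    rw [hμ, hnow] at this
    refine ⟨mapTW σ w, ⟨(c'.1, σ ∘ c'.2.1, σ c'.2.2), this, hfin⟩, ?_⟩
    simp only [mapTW, List.map_map]
    have : (fun p : A × ℝ => (p.1, π p.2)) ∘ (fun p : A × ℝ => (p.1, σ p.2)) = id := by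
      funext p; simp [Function.comp, hrσ]
    rw [this, List.map_id]
  · rintro ⟨v, ⟨c', hrun, hfin⟩, rfl⟩
    exact ⟨(c'.1, π ∘ c'.2.1, π c'.2.2), run_map Aut hπ hrun, hfin⟩
end

section
/- Let Y be a class of timed languages that (1) contains all timeless timed languages (languages recognised by 0-clock automata), (2) is closed under union and under composition L ▷ {$} ▷ M, and (3) contains some language not recognised by any deterministic timed automaton with k clocks. Then for every L ∈ Y over alphabet Σ, setting N := (L ▷ {$} ▷ TW(Γ)) ∪ (TW(Σ) ▷ {$} ▷ M), where M ∈ Y is a fixed non-k-DTA language over Γ and $ is a fresh symbol: L = TW(Σ) if and only if N is recognised by a deterministic timed automaton with k clocks. -/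
/-- The set of all timed words over alphabet `A`. -/
def TW (A : Type*) : Set (List (A × ℝ)) := {w | IsTimedWord w}

/-- Composition `L ▷ {$} ▷ M`: words of `L`, followed by the fresh symbol `$` at some
time `t`, followed by a word of `M` shifted by `t`; the fresh symbol is modelled by
the middle `Unit` summand. -/
def compLang {A B : Type*} (L : Set (List (A × ℝ))) (M : Set (List (B × ℝ))) :
    Set (List ((A ⊕ Unit ⊕ B) × ℝ)) :=
  {w | ∃ v ∈ L, ∃ t : ℝ, ∃ m ∈ M,
    w = (v.map fun p => (Sum.inl p.1, p.2)) ++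
      (Sum.inr (Sum.inl ()), t) ::
        (m.map fun p => (Sum.inr (Sum.inr p.1), p.2 + t)) ∧
    IsTimedWord w}

/-- Recognisability by a deterministic timed automaton with `k` clocks. -/
def RecognisableByDTA (k : ℕ) {A : Type*} (L : Set (List (A × ℝ))) : Prop :=
  ∃ (Loc : Type) (_ : Finite Loc) (B : TimedAutomaton A Loc (Fin k)),
    B.IsDeterministic ∧ TimedAutomaton.Lang B = L

/-- A timed language is timeless if it is recognised by a timed automaton with no
clocks. -/
def Timeless {A : Type*} (L : Set (List (A × ℝ))) : Prop :=
  ∃ (Loc : Type) (_ : Finite Loc) (B : TimedAutomaton A Loc Empty),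
    TimedAutomaton.Lang B = L

namespace UICD

open Classical

/-! ### CmpOp basics -/

lemma CmpOp.holds_iff_map {c : CmpOp} {a b a' b' : ℝ}
    (hlt : a < b ↔ a' < b') (heq : a = b ↔ a' = b') :
    c.holds a b ↔ c.holds a' b' := by
  have hgt : b < a ↔ b' < a' := by
    constructor <;> intro h
    · rcases lt_trichotomy a' b' with h' | h' | h'
      · exact absurd (hlt.mpr h') (by linarith)
      · exact absurd (heq.mpr h') (by intro hh; linarith)
      · exact h'
    · rcases lt_trichotomy a b with h' | h' | h'
      · exact absurd (hlt.mp h') (by linarith)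
      · exact absurd (heq.mp h') (by intro hh; linarith)
      · exact h'
  have hle : a ≤ b ↔ a' ≤ b' := by
    rw [← not_lt, ← not_lt, hgt]
  have hge : b ≤ a ↔ b' ≤ a' := by
    rw [← not_lt, ← not_lt, hlt]
  cases c <;> simp only [CmpOp.holds, ge_iff_le, gt_iff_lt]
  · exact hlt
  · exact hle
  · exact heq
  · exact hge
  · exact hgt

lemma CmpOp.holds_shift (c : CmpOp) (a d b : ℝ) :
    c.holds (a + d) b ↔ c.holds a (b - d) := by
  cases c <;> simp only [CmpOp.holds, ge_iff_le, gt_iff_lt] <;> constructor <;>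
    intro h <;> linarith

lemma CmpOp.holds_congr {c : CmpOp} {a a' : ℝ} (b : ℝ) (h : a = a') :
    c.holds a b ↔ c.holds a' b := by rw [h]

/-! ### ℤ-fixing timed automorphisms -/

def IsZA (π : ℝ → ℝ) : Prop := IsTimedAutomorphism π ∧ π 0 = 0

namespace IsZA

variable {π σ : ℝ → ℝ}

lemma id' : IsZA (fun x => x) :=
  ⟨⟨Function.bijective_id, strictMono_id, fun _ => rfl⟩, rfl⟩

lemma strictMono (h : IsZA π) : StrictMono π := h.1.2.1

lemma bijective (h : IsZA π) : Function.Bijective π := h.1.1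

lemma lt_iff (h : IsZA π) {a b : ℝ} : π a < π b ↔ a < b := h.strictMono.lt_iff_lt

lemma le_iff (h : IsZA π) {a b : ℝ} : π a ≤ π b ↔ a ≤ b := h.strictMono.le_iff_le

lemma eq_iff (h : IsZA π) {a b : ℝ} : π a = π b ↔ a = b := h.1.1.1.eq_iff

lemma add_one (h : IsZA π) (x : ℝ) : π (x + 1) = π x + 1 := h.1.2.2 x

lemma add_int (h : IsZA π) (x : ℝ) (n : ℤ) : π (x + n) = π x + n := by
  induction n using Int.induction_on with
  | zero => simp
  | succ n ih =>
      have e1 : x + (((n : ℤ) + 1 : ℤ) : ℝ) = (x + ((n : ℤ) : ℝ)) + 1 := by push_cast; ring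
      rw [e1, h.add_one, ih]; push_cast; ring
  | pred n ih =>
      have e1 : (x + ((-(n:ℤ) - 1 : ℤ) : ℝ)) + 1 = x + ((-(n:ℤ) : ℤ) : ℝ) := by push_cast; ring
      have h2 := h.add_one (x + ((-(n:ℤ) - 1 : ℤ) : ℝ))
      rw [e1, ih] at h2
      have e2 : π (x + ((-(n:ℤ) - 1 : ℤ) : ℝ)) = π x + ((-(n:ℤ) - 1 : ℤ) : ℝ) := by
        push_cast at h2 ⊢; linarith
      rw [e2]

lemma map_int (h : IsZA π) (n : ℤ) : π n = n := by
  have := h.add_int 0 n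
  simpa [h.2] using this

lemma comp (hσ : IsZA σ) (hπ : IsZA π) : IsZA (σ ∘ π) :=
  ⟨⟨hσ.bijective.comp hπ.bijective, hσ.strictMono.comp hπ.strictMono,
    fun x => by simp [Function.comp, hπ.add_one, hσ.add_one]⟩,
   by simp [Function.comp, hπ.2, hσ.2]⟩

lemma nonneg (h : IsZA π) {x : ℝ} (hx : 0 ≤ x) : 0 ≤ π x := by
  have := h.le_iff (a := 0) (b := x)
  rw [h.2] at this
  exact this.mpr hx

/-- The inverse of a ℤ-fixing automorphism. -/
lemma inv (h : IsZA π) : ∃ σ, IsZA σ ∧ Function.LeftInverse σ π ∧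
    Function.RightInverse σ π := by
  classical
  refine ⟨Function.invFun π, ?_, Function.leftInverse_invFun h.bijective.1,
    Function.rightInverse_invFun h.bijective.2⟩
  have hli := Function.leftInverse_invFun h.bijective.1
  have hri := Function.rightInverse_invFun h.bijective.2
  refine ⟨⟨Function.bijective_iff_has_inverse.mpr ⟨π, hri, hli⟩, ?_, ?_⟩, ?_⟩
  · intro a b hab
    have : π (Function.invFun π a) < π (Function.invFun π b) := by
      rwa [hri a, hri b]
    exact (h.lt_iff).mp this
  · intro x
    apply h.bijective.1
    rw [hri, h.add_one, hri]
  · apply h.bijective.1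
    rw [hri, h.2]

lemma holds_sub (h : IsZA π) (c : CmpOp) (z : ℤ) (a b : ℝ) :
    c.holds (π a - π b) z ↔ c.holds (a - b) z := by
  have hlt : π a - π b < (z:ℝ) ↔ a - b < (z:ℝ) := by
    rw [sub_lt_iff_lt_add, sub_lt_iff_lt_add]
    rw [show (z:ℝ) + π b = π b + z by ring, ← h.add_int, h.lt_iff]
    constructor <;> intro hh <;> linarith
  have heq : π a - π b = (z:ℝ) ↔ a - b = (z:ℝ) := by
    rw [sub_eq_iff_eq_add, sub_eq_iff_eq_add]
    rw [show (z:ℝ) + π b = π b + z by ring, ← h.add_int, h.eq_iff]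
    constructor <;> intro hh <;> linarith
  exact CmpOp.holds_iff_map hlt heq

lemma sat_val (h : IsZA π) (t : ℝ) {X : Type*} (μ : X → ℝ) (φ : ClockConstraint X) :
    ClockConstraint.sat (fun x => π t - π (μ x)) φ ↔
      ClockConstraint.sat (fun x => t - μ x) φ := by
  induction φ with
  | tt => simp [ClockConstraint.sat]
  | ff => simp [ClockConstraint.sat]
  | diff x y c z =>
      simp only [ClockConstraint.sat]
      rw [CmpOp.holds_congr (z:ℝ) (show (π t - π (μ x)) - (π t - π (μ y)) = π (μ y) - π (μ x) by ring)]
      rw [CmpOp.holds_congr (z:ℝ) (show (t - μ x) - (t - μ y) = μ y - μ x by ring)]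
      exact h.holds_sub c z _ _
  | single x c z =>
      simp only [ClockConstraint.sat]
      exact h.holds_sub c z t (μ x)
  | not φ ih => simp only [ClockConstraint.sat]; rw [ih]
  | and φ ψ ih1 ih2 => simp only [ClockConstraint.sat]; rw [ih1, ih2]
  | or φ ψ ih1 ih2 => simp only [ClockConstraint.sat]; rw [ih1, ih2]

lemma sat_point (h : IsZA π) {X : Type*} (ν : X → ℝ) (φ : ClockConstraint X) :
    ClockConstraint.sat (fun x => π (ν x)) φ ↔ ClockConstraint.sat ν φ := by
  induction φ with
  | tt => simp [ClockConstraint.sat]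
  | ff => simp [ClockConstraint.sat]
  | diff x y c z =>
      simp only [ClockConstraint.sat]
      exact h.holds_sub c z _ _
  | single x c z =>
      simp only [ClockConstraint.sat]
      rw [CmpOp.holds_congr (z:ℝ) (show π (ν x) = π (ν x) - π 0 by rw [h.2]; ring)]
      have h2 := h.holds_sub c z (ν x) 0
      rw [CmpOp.holds_congr (z:ℝ) (show ν x - 0 = ν x by ring)] at h2
      exact h2
  | not φ ih => simp only [ClockConstraint.sat]; rw [ih]
  | and φ ψ ih1 ih2 => simp only [ClockConstraint.sat]; rw [ih1, ih2]
  | or φ ψ ih1 ih2 => simp only [ClockConstraint.sat]; rw [ih1, ih2]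

end IsZA

end UICD
namespace UICD

/-! ### Values with good fractional parts -/

/-- `v` is at distance `≥ ε` from every non-floor integer: `v` is an integer or its
fractional part lies in `[ε, 1-ε]`. -/
def Gd (ε v : ℝ) : Prop := ∃ n : ℤ, v = n ∨ ((n:ℝ) + ε ≤ v ∧ v ≤ n + 1 - ε)

lemma Gd.intCast (ε : ℝ) (n : ℤ) : Gd ε (n : ℝ) := ⟨n, Or.inl rfl⟩

lemma Gd.zero (ε : ℝ) : Gd ε 0 := by simpa using Gd.intCast ε 0

lemma Gd.neg {ε v : ℝ} (h : Gd ε v) : Gd ε (-v) := by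
  obtain ⟨n, h | ⟨h1, h2⟩⟩ := h
  · exact ⟨-n, Or.inl (by rw [h]; push_cast; ring)⟩
  · exact ⟨-n - 1, Or.inr (by constructor <;> push_cast <;> linarith)⟩

lemma Gd.tricho {ε v : ℝ} (hε1 : ε ≤ 1) (h : Gd ε v) (n : ℤ) :
    v ≤ (n:ℝ) - ε ∨ v = n ∨ (n:ℝ) + ε ≤ v := by
  obtain ⟨m, h | ⟨h1, h2⟩⟩ := h
  · rcases lt_trichotomy m n with hmn | hmn | hmn
    · left
      have : (m:ℝ) ≤ (n:ℝ) - 1 := by exact_mod_cast Int.le_sub_one_of_lt hmn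
      linarith [h ▸ this]
    · right; left; rw [h, hmn]
    · right; right
      have : (n:ℝ) + 1 ≤ (m:ℝ) := by exact_mod_cast Int.add_one_le_of_lt hmn
      linarith [h ▸ this]
  · rcases le_or_gt m (n - 1) with hmn | hmn
    · left
      have : (m:ℝ) ≤ (n:ℝ) - 1 := by exact_mod_cast hmn
      linarith
    · right; right
      have : (n:ℝ) ≤ (m:ℝ) := by
        have : n ≤ m := by omega
        exact_mod_cast this
      linarith

/-- Rounding for thresholds slightly above an integer. -/
lemma round_above {ε v r : ℝ} (hε1 : ε ≤ 1) (n : ℤ) (hr1 : (n:ℝ) < r)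
    (hr2 : r < n + ε) (hv : Gd ε v) :
    (v < r ↔ v ≤ n) ∧ (v ≤ r ↔ v ≤ n) ∧ (¬ v = r) ∧
    ((n:ℝ) < v ↔ r ≤ v) ∧ ((n:ℝ) < v ↔ r < v) := by
  rcases hv.tricho hε1 n with h | h | h <;>
    refine ⟨⟨?_, ?_⟩, ⟨?_, ?_⟩, ?_, ⟨?_, ?_⟩, ⟨?_, ?_⟩⟩ <;> intro hh <;> linarith

/-- Rounding for thresholds slightly below an integer. -/
lemma round_below {ε v r : ℝ} (hε1 : ε ≤ 1) (n : ℤ) (hr1 : (n:ℝ) - ε < r)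
    (hr2 : r < n) (hv : Gd ε v) :
    (v < r ↔ v < n) ∧ (v ≤ r ↔ v < n) ∧ (¬ v = r) ∧
    ((n:ℝ) ≤ v ↔ r ≤ v) ∧ ((n:ℝ) ≤ v ↔ r < v) := by
  rcases hv.tricho hε1 n with h | h | h <;>
    refine ⟨⟨?_, ?_⟩, ⟨?_, ?_⟩, ?_, ⟨?_, ?_⟩, ⟨?_, ?_⟩⟩ <;> intro hh <;> linarith

/-! ### Integer constraints only depend on the integer parts and the signs of
fractional offsets -/

lemma holds_int_frac (c : CmpOp) (z D : ℤ) {δ δ' : ℝ}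
    (hδa : -1 < δ) (hδb : δ < 1) (hδ'a : -1 < δ') (hδ'b : δ' < 1)
    (hpos : 0 < δ ↔ 0 < δ') (hzero : δ = 0 ↔ δ' = 0) :
    c.holds ((D:ℝ) + δ) z ↔ c.holds ((D:ℝ) + δ') z := by
  have hneg : δ < 0 ↔ δ' < 0 := by
    constructor <;> intro h
    · rcases lt_trichotomy δ' 0 with h' | h' | h'
      · exact h'
      · exact absurd (hzero.mpr h') (by linarith)
      · exact absurd (hpos.mpr h') (by linarith)
    · rcases lt_trichotomy δ 0 with h' | h' | h'
      · exact h'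
      · exact absurd (hzero.mp h') (by linarith)
      · exact absurd (hpos.mp h') (by linarith)
  have ltneg : ∀ d : ℝ, -1 < d → d < 0 → (((D:ℝ) + d < z) ↔ D ≤ z) := by
    intro d h1 h2
    constructor
    · intro hh
      have h3 : (D:ℝ) - 1 < z := by linarith
      have h4 : (D:ℤ) - 1 < z := by exact_mod_cast h3
      omega
    · intro hh
      have h3 : (D:ℝ) ≤ z := by exact_mod_cast hh
      linarith
  have ltpos : ∀ d : ℝ, 0 < d → d < 1 → (((D:ℝ) + d < z) ↔ D < z) := by
    intro d h1 h2
    constructor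
    · intro hh
      have h3 : (D:ℝ) < z := by linarith
      exact_mod_cast h3
    · intro hh
      have h4 : D + 1 ≤ z := by omega
      have h5 : (D:ℝ) + 1 ≤ z := by exact_mod_cast h4
      linarith
  have lepos : ∀ d : ℝ, 0 < d → d < 1 → (((D:ℝ) + d ≤ z) ↔ D < z) := by
    intro d h1 h2
    constructor
    · intro hh
      have h3 : (D:ℝ) < z := by linarith
      exact_mod_cast h3
    · intro hh
      have h4 : D + 1 ≤ z := by omega
      have h5 : (D:ℝ) + 1 ≤ z := by exact_mod_cast h4
      linarith
  have leneg : ∀ d : ℝ, -1 < d → d < 0 → (((D:ℝ) + d ≤ z) ↔ D ≤ z) := by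
    intro d h1 h2
    constructor
    · intro hh
      have h3 : (D:ℝ) - 1 < z := by linarith
      have h4 : (D:ℤ) - 1 < z := by exact_mod_cast h3
      omega
    · intro hh
      have h3 : (D:ℝ) ≤ z := by exact_mod_cast hh
      linarith
  have eqne : ∀ d : ℝ, -1 < d → d < 1 → d ≠ 0 → ¬ ((D:ℝ) + d = z) := by
    intro d h1 h2 h3 hh
    have h4 : d = ((z - D : ℤ) : ℝ) := by push_cast; linarith
    have h5 : -1 < ((z - D : ℤ) : ℝ) := h4 ▸ h1
    have h6 : ((z - D : ℤ) : ℝ) < 1 := h4 ▸ h2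
    have h7 : (-1 : ℤ) < z - D := by exact_mod_cast h5
    have h8 : (z - D : ℤ) < 1 := by exact_mod_cast h6
    have h9 : (z - D : ℤ) = 0 := by omega
    rw [h4, h9] at h3
    simp at h3
  have hLT : ((D:ℝ) + δ < z) ↔ ((D:ℝ) + δ' < z) := by
    rcases lt_trichotomy δ 0 with h | h | h
    · rw [ltneg δ hδa h, ← ltneg δ' hδ'a (hneg.mp h)]
    · rw [h, hzero.mp h]
    · rw [ltpos δ h hδb, ← ltpos δ' (hpos.mp h) hδ'b]
  have hLE : ((D:ℝ) + δ ≤ z) ↔ ((D:ℝ) + δ' ≤ z) := by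
    rcases lt_trichotomy δ 0 with h | h | h
    · rw [leneg δ hδa h, ← leneg δ' hδ'a (hneg.mp h)]
    · rw [h, hzero.mp h]
    · rw [lepos δ h hδb, ← lepos δ' (hpos.mp h) hδ'b]
  have hEQ : ((D:ℝ) + δ = z) ↔ ((D:ℝ) + δ' = z) := by
    rcases eq_or_ne δ 0 with h | h
    · rw [h, hzero.mp h]
    · constructor <;> intro hh
      · exact absurd hh (eqne δ hδa hδb h)
      · exact absurd hh (eqne δ' hδ'a hδ'b (fun h' => h (hzero.mpr h')))
  cases c
  · exact hLT
  · exact hLE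
  · exact hEQ
  · show (z:ℝ) ≤ _ ↔ (z:ℝ) ≤ _
    rw [← not_lt, ← not_lt, hLT]
  · show (z:ℝ) < _ ↔ (z:ℝ) < _
    rw [← not_le, ← not_le, hLE]

end UICD
namespace UICD

/-! ### A one-node piecewise-linear ℤ-fixing automorphism -/

noncomputable def og (q q' t : ℝ) : ℝ :=
  if t ≤ q then t * (q' / q) else 1 - (1 - t) * ((1 - q') / (1 - q))

noncomputable def onode (q q' x : ℝ) : ℝ := ⌊x⌋ + og q q' (Int.fract x)

lemma og_zero {q q' : ℝ} (hq0 : 0 < q) : og q q' 0 = 0 := by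
  rw [og, if_pos hq0.le, zero_mul]

lemma og_of_le {q q' t : ℝ} (ht : t ≤ q) : og q q' t = t * (q' / q) := by
  rw [og, if_pos ht]

lemma og_of_gt {q q' t : ℝ} (ht : q < t) :
    og q q' t = 1 - (1 - t) * ((1 - q') / (1 - q)) := by
  rw [og, if_neg (not_le.mpr ht)]

lemma og_le {q q' t : ℝ} (hq0 : 0 < q) (hq'0 : 0 < q') (ht : t ≤ q) :
    og q q' t ≤ q' := by
  rw [og_of_le ht]
  have h1 : t * (q' / q) ≤ q * (q' / q) :=
    mul_le_mul_of_nonneg_right ht (by positivity)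
  have h2 : q * (q' / q) = q' := by field_simp
  linarith

lemma og_q {q q' : ℝ} (hq0 : 0 < q) : og q q' q = q' := by
  rw [og_of_le le_rfl]; field_simp

lemma og_gt {q q' t : ℝ} (hq1 : q < 1) (hq'1 : q' < 1) (ht : q < t) :
    q' < og q q' t := by
  rw [og_of_gt ht]
  have hne : (1:ℝ) - q ≠ 0 := by linarith
  have h1 : (1 - t) * ((1 - q') / (1 - q)) < (1 - q) * ((1 - q') / (1 - q)) :=
    mul_lt_mul_of_pos_right (by linarith) (div_pos (by linarith) (by linarith))
  have h2 : (1 - q) * ((1 - q') / (1 - q)) = 1 - q' := by field_simp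
  linarith

lemma og_nonneg {q q' t : ℝ} (hq0 : 0 < q) (hq1 : q < 1) (hq'0 : 0 < q')
    (hq'1 : q' < 1) (ht : 0 ≤ t) : 0 ≤ og q q' t := by
  rcases le_or_gt t q with h | h
  · rw [og_of_le h]; positivity
  · linarith [og_gt hq1 hq'1 h]

lemma og_pos {q q' t : ℝ} (hq1 : q < 1) (hq0 : 0 < q) (hq'0 : 0 < q')
    (hq'1 : q' < 1) (ht : 0 < t) : 0 < og q q' t := by
  rcases le_or_gt t q with h | h
  · rw [og_of_le h]; positivity
  · linarith [og_gt hq1 hq'1 h]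

lemma og_lt_one {q q' t : ℝ} (hq0 : 0 < q) (hq1 : q < 1) (hq'0 : 0 < q')
    (hq'1 : q' < 1) (ht : t < 1) : og q q' t < 1 := by
  rcases le_or_gt t q with h | h
  · have := og_le hq0 hq'0 (t := t) h
    linarith
  · rw [og_of_gt h]
    have : 0 < (1 - t) * ((1 - q') / (1 - q)) :=
      mul_pos (by linarith) (div_pos (by linarith) (by linarith))
    linarith

lemma og_strictMono {q q' t1 t2 : ℝ} (hq0 : 0 < q) (hq1 : q < 1) (hq'0 : 0 < q')
    (hq'1 : q' < 1) (h0 : 0 ≤ t1) (h : t1 < t2) : og q q' t1 < og q q' t2 := by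
  rcases le_or_gt t2 q with h2 | h2
  · rw [og_of_le h2, og_of_le (h.le.trans h2)]
    exact mul_lt_mul_of_pos_right h (by positivity)
  · rcases le_or_gt t1 q with h1 | h1
    · calc og q q' t1 ≤ q' := og_le hq0 hq'0 h1
        _ < og q q' t2 := og_gt hq1 hq'1 h2
    · rw [og_of_gt h1, og_of_gt h2]
      have : (1 - t2) * ((1 - q') / (1 - q)) < (1 - t1) * ((1 - q') / (1 - q)) :=
        mul_lt_mul_of_pos_right (by linarith) (div_pos (by linarith) (by linarith))
      linarith

lemma og_mono {q q' t1 t2 : ℝ} (hq0 : 0 < q) (hq1 : q < 1) (hq'0 : 0 < q')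
    (hq'1 : q' < 1) (h0 : 0 ≤ t1) (h : t1 ≤ t2) : og q q' t1 ≤ og q q' t2 := by
  rcases eq_or_lt_of_le h with h' | h'
  · rw [h']
  · exact (og_strictMono hq0 hq1 hq'0 hq'1 h0 h').le

lemma og_inv {q q' t : ℝ} (hq0 : 0 < q) (hq1 : q < 1) (hq'0 : 0 < q')
    (hq'1 : q' < 1) (h0 : 0 ≤ t) : og q' q (og q q' t) = t := by
  rcases le_or_gt t q with h | h
  · rw [og_of_le h]
    have hb : t * (q' / q) ≤ q' := by
      have h1 : t * (q' / q) ≤ q * (q' / q) :=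
        mul_le_mul_of_nonneg_right h (by positivity)
      have h2 : q * (q' / q) = q' := by field_simp
      linarith
    rw [og_of_le hb]
    field_simp
  · have hgt : q' < og q q' t := og_gt hq1 hq'1 h
    rw [og_of_gt h] at hgt ⊢
    rw [og_of_gt hgt]
    have h1q : (1:ℝ) - q ≠ 0 := by linarith
    have h1q' : (1:ℝ) - q' ≠ 0 := by linarith
    field_simp
    ring

lemma fract_onode {q q' : ℝ} (hq0 : 0 < q) (hq1 : q < 1) (hq'0 : 0 < q')
    (hq'1 : q' < 1) (x : ℝ) : Int.fract (onode q q' x) = og q q' (Int.fract x) := by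
  rw [onode, Int.fract_intCast_add, Int.fract_eq_self.mpr
    ⟨og_nonneg hq0 hq1 hq'0 hq'1 (Int.fract_nonneg x),
     og_lt_one hq0 hq1 hq'0 hq'1 (Int.fract_lt_one x)⟩]

lemma floor_onode {q q' : ℝ} (hq0 : 0 < q) (hq1 : q < 1) (hq'0 : 0 < q')
    (hq'1 : q' < 1) (x : ℝ) : ⌊onode q q' x⌋ = ⌊x⌋ := by
  rw [onode, Int.floor_intCast_add, Int.floor_eq_zero_iff.mpr
    ⟨og_nonneg hq0 hq1 hq'0 hq'1 (Int.fract_nonneg x),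
     og_lt_one hq0 hq1 hq'0 hq'1 (Int.fract_lt_one x)⟩, add_zero]

lemma onode_inv {q q' : ℝ} (hq0 : 0 < q) (hq1 : q < 1) (hq'0 : 0 < q')
    (hq'1 : q' < 1) (x : ℝ) : onode q' q (onode q q' x) = x := by
  rw [onode, floor_onode hq0 hq1 hq'0 hq'1, fract_onode hq0 hq1 hq'0 hq'1,
    og_inv hq0 hq1 hq'0 hq'1 (Int.fract_nonneg x), Int.floor_add_fract]

lemma onode_strictMono {q q' : ℝ} (hq0 : 0 < q) (hq1 : q < 1) (hq'0 : 0 < q')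
    (hq'1 : q' < 1) : StrictMono (onode q q') := by
  intro x y hxy
  rcases lt_or_eq_of_le (Int.floor_le_floor hxy.le) with hf | hf
  · have h1 : onode q q' x < ⌊x⌋ + 1 := by
      have := og_lt_one hq0 hq1 hq'0 hq'1 (Int.fract_lt_one x)
      rw [onode]; linarith
    have h2 : (⌊x⌋ : ℝ) + 1 ≤ ⌊y⌋ := by exact_mod_cast Int.add_one_le_of_lt hf
    have h3 : (⌊y⌋:ℝ) ≤ onode q q' y := by
      have := og_nonneg hq0 hq1 hq'0 hq'1 (Int.fract_nonneg y)
      rw [onode]; linarith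
    linarith
  · have hfr : Int.fract x < Int.fract y := by
      rw [Int.fract, Int.fract, hf]
      linarith
    have := og_strictMono hq0 hq1 hq'0 hq'1 (Int.fract_nonneg x) hfr
    rw [onode, onode, hf]
    linarith

lemma isZA_onode {q q' : ℝ} (hq0 : 0 < q) (hq1 : q < 1) (hq'0 : 0 < q')
    (hq'1 : q' < 1) : IsZA (onode q q') := by
  refine ⟨⟨?_, onode_strictMono hq0 hq1 hq'0 hq'1, ?_⟩, ?_⟩
  · exact Function.bijective_iff_has_inverse.mpr
      ⟨onode q' q, fun x => onode_inv hq0 hq1 hq'0 hq'1 x,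
       fun x => onode_inv hq'0 hq'1 hq0 hq1 x⟩
  · intro x
    rw [onode, onode, Int.fract_add_one, Int.floor_add_one]
    push_cast; ring
  · rw [onode, Int.floor_zero, Int.fract_zero, og_zero hq0]
    simp

/-! ### Gd from fract facts -/

lemma Gd_of_fract_zero {ε v : ℝ} (h : Int.fract v = 0) : Gd ε v := by
  refine ⟨⌊v⌋, Or.inl ?_⟩
  have h2 := Int.floor_add_fract v
  rw [h, add_zero] at h2
  exact h2.symm

lemma Gd_of_fract_between {ε v : ℝ} (h1 : ε ≤ Int.fract v) (h2 : Int.fract v ≤ 1 - ε) :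
    Gd ε v :=
  ⟨⌊v⌋, Or.inr ⟨by linarith [Int.floor_add_fract v], by linarith [Int.floor_add_fract v]⟩⟩

/-! ### Squeezing lemmas -/

/-- A ℤ-fixing automorphism squeezing the fractional parts of finitely many reals
below `ε`. -/
lemma squeeze_low (l : List ℝ) {ε : ℝ} (hε : 0 < ε) (hε1 : ε < 1) :
    ∃ π, IsZA π ∧ ∀ t ∈ l, Int.fract (π t) < ε := by
  classical
  set S : Finset ℝ := (l.toFinset.image Int.fract).filter (fun t => 0 < t) with hS
  rcases S.eq_empty_or_nonempty with hSe | hSne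
  · refine ⟨fun x => x, IsZA.id', fun t ht => ?_⟩
    have h0 : Int.fract t = 0 := by
      by_contra h
      have hpos : 0 < Int.fract t := lt_of_le_of_ne (Int.fract_nonneg t) (Ne.symm h)
      have hmem : Int.fract t ∈ S := by
        rw [hS, Finset.mem_filter, Finset.mem_image]
        exact ⟨⟨t, List.mem_toFinset.mpr ht, rfl⟩, hpos⟩
      rw [hSe] at hmem
      exact absurd hmem (Finset.notMem_empty _)
    rw [h0]; exact hε
  · set b := S.max' hSne with hb
    have hbS : b ∈ S := S.max'_mem hSne
    have hb0 : 0 < b := (Finset.mem_filter.mp hbS).2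
    have hb1 : b < 1 := by
      obtain ⟨s, _, hs⟩ := Finset.mem_image.mp (Finset.mem_filter.mp hbS).1
      rw [← hs]; exact Int.fract_lt_one s
    have he0 : 0 < ε/2 := by linarith
    have he1 : ε/2 < 1 := by linarith
    refine ⟨onode b (ε/2), isZA_onode hb0 hb1 he0 he1, fun t ht => ?_⟩
    rw [fract_onode hb0 hb1 he0 he1]
    rcases eq_or_lt_of_le (Int.fract_nonneg t) with h0 | h0
    · rw [← h0, og_zero hb0]; exact hε
    · have hmem : Int.fract t ∈ S := by
        rw [hS, Finset.mem_filter, Finset.mem_image]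
        exact ⟨⟨t, List.mem_toFinset.mpr ht, rfl⟩, h0⟩
      have hle : Int.fract t ≤ b := S.le_max' _ hmem
      have := og_le hb0 he0 hle
      linarith

lemma og_mid_upper {a t : ℝ} (ha0 : 0 < a) (ha : a ≤ 1/2) (ht : t ≤ 1/2) :
    og a (1/2) t ≤ 3/4 := by
  rcases le_or_gt t a with h | h
  · have := og_le ha0 (by norm_num : (0:ℝ) < 1/2) h
    linarith
  · rw [og_of_gt h]
    have ha1 : (0:ℝ) < 1 - a := by linarith
    have k1 : (1:ℝ)/2 ≤ (1 - 1/2) / (1 - a) := by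
      rw [le_div_iff₀ ha1]; nlinarith
    have k2 : (1:ℝ)/2 ≤ 1 - t := by linarith
    nlinarith

/-- A ℤ-fixing automorphism moving the fractional parts of finitely many reals into
`{0} ∪ [1/2, 3/4]`, in particular making them `Gd ε` for `ε ≤ 1/4`. -/
lemma squeeze_mid (l : List ℝ) {ε : ℝ} (hε : 0 < ε) (hε4 : ε ≤ 1/4) :
    ∃ π, IsZA π ∧ ∀ t ∈ l, Gd ε (π t) := by
  classical
  set S : Finset ℝ := (l.toFinset.image Int.fract).filter (fun t => 0 < t) with hS
  rcases S.eq_empty_or_nonempty with hSe | hSne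
  · refine ⟨fun x => x, IsZA.id', fun t ht => ?_⟩
    apply Gd_of_fract_zero
    by_contra h
    have hpos : 0 < Int.fract t := lt_of_le_of_ne (Int.fract_nonneg t) (Ne.symm h)
    have hmem : Int.fract t ∈ S := by
      rw [hS, Finset.mem_filter, Finset.mem_image]
      exact ⟨⟨t, List.mem_toFinset.mpr ht, rfl⟩, hpos⟩
    rw [hSe] at hmem
    exact absurd hmem (Finset.notMem_empty _)
  · set b := S.max' hSne with hb
    set a := S.min' hSne with ha
    have hbS : b ∈ S := S.max'_mem hSne
    have haS : a ∈ S := S.min'_mem hSne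
    have hb0 : 0 < b := (Finset.mem_filter.mp hbS).2
    have ha0 : 0 < a := (Finset.mem_filter.mp haS).2
    have hab : a ≤ b := S.min'_le _ hbS
    have hb1 : b < 1 := by
      obtain ⟨s, _, hs⟩ := Finset.mem_image.mp (Finset.mem_filter.mp hbS).1
      rw [← hs]; exact Int.fract_lt_one s
    have half0 : (0:ℝ) < 1/2 := by norm_num
    have half1 : (1:ℝ)/2 < 1 := by norm_num
    set a' := og b (1/2) a with ha'
    have ha'0 : 0 < a' := og_pos hb1 hb0 half0 half1 ha0
    have ha'h : a' ≤ 1/2 := by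
      have := og_le hb0 half0 hab
      rw [← ha'] at this
      linarith
    have ha'1 : a' < 1 := by linarith
    refine ⟨fun x => onode a' (1/2) (onode b (1/2) x),
      IsZA.comp (isZA_onode ha'0 ha'1 half0 half1) (isZA_onode hb0 hb1 half0 half1),
      fun t ht => ?_⟩
    rcases eq_or_lt_of_le (Int.fract_nonneg t) with h0 | h0
    · apply Gd_of_fract_zero
      rw [fract_onode ha'0 ha'1 half0 half1, fract_onode hb0 hb1 half0 half1, ← h0,
        og_zero hb0, og_zero ha'0]
    · have htS : Int.fract t ∈ S := by
        rw [hS, Finset.mem_filter, Finset.mem_image]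
        exact ⟨⟨t, List.mem_toFinset.mpr ht, rfl⟩, h0⟩
      have hta : a ≤ Int.fract t := S.min'_le _ htS
      have htb : Int.fract t ≤ b := S.le_max' _ htS
      set x1 := og b (1/2) (Int.fract t) with hx1
      have hx1a : a' ≤ x1 := og_mono hb0 hb1 half0 half1 ha0.le hta
      have hx1h : x1 ≤ 1/2 := by
        have := og_le hb0 half0 htb
        rw [← hx1] at this
        linarith
      have hlow : 1/2 ≤ og a' (1/2) x1 := by
        have := og_mono ha'0 ha'1 half0 half1 ha'0.le hx1a
        rw [og_q ha'0] at this
        linarith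
      have hhigh : og a' (1/2) x1 ≤ 3/4 := og_mid_upper ha'0 ha'h hx1h
      apply Gd_of_fract_between (ε := ε)
      · rw [fract_onode ha'0 ha'1 half0 half1, fract_onode hb0 hb1 half0 half1, ← hx1]
        linarith
      · rw [fract_onode ha'0 ha'1 half0 half1, fract_onode hb0 hb1 half0 half1, ← hx1]
        linarith

end UICD
namespace UICD

open TimedAutomaton

/-! ### mapTW basics -/

lemma mapTW_append {A : Type*} (π : ℝ → ℝ) (w1 w2 : List (A × ℝ)) :
    mapTW π (w1 ++ w2) = mapTW π w1 ++ mapTW π w2 := by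
  simp [mapTW]

lemma mapTW_cons {A : Type*} (π : ℝ → ℝ) (e : A × ℝ) (w : List (A × ℝ)) :
    mapTW π (e :: w) = (e.1, π e.2) :: mapTW π w := by
  simp [mapTW]

lemma mapTW_mapTW {A : Type*} (σ π : ℝ → ℝ) (w : List (A × ℝ)) :
    mapTW σ (mapTW π w) = mapTW (fun t => σ (π t)) w := by
  simp [mapTW]

lemma mapTW_leftinv {A : Type*} {σ π : ℝ → ℝ} (h : Function.LeftInverse σ π)
    (w : List (A × ℝ)) : mapTW σ (mapTW π w) = w := by
  rw [mapTW_mapTW]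
  have : (fun (p : A × ℝ) => (p.1, σ (π p.2))) = fun p => p := by
    funext p; rw [h p.2]
  simp [mapTW, this]

lemma mapTW_map {A : Type*} (π : ℝ → ℝ) (w : List (A × ℝ)) :
    (mapTW π w).map Prod.snd = (w.map Prod.snd).map π := by
  simp [mapTW]

lemma mapTW_TW {A : Type*} {π : ℝ → ℝ} (hπ : IsZA π) {w : List (A × ℝ)}
    (hw : w ∈ TW A) : mapTW π w ∈ TW A := by
  obtain ⟨h1, h2⟩ := hw
  refine ⟨?_, ?_⟩
  · intro p hp
    obtain ⟨p', hp', he⟩ := List.mem_map.mp hp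
    rw [← he]
    exact hπ.nonneg (h1 p' hp')
  · rw [mapTW_map]
    exact List.isChain_map_of_isChain π (fun a b h => (hπ.le_iff).mpr h) h2

/-! ### Generic timed-automaton lemmas -/

section generic

variable {A Q X : Type*} {Aut : TimedAutomaton A Q X}

lemma run_append_iff {c c'' : TAConfig Q X} {w1 w2 : List (A × ℝ)} :
    Aut.Run c (w1 ++ w2) c'' ↔ ∃ c', Aut.Run c w1 c' ∧ Aut.Run c' w2 c'' := by
  constructor
  · intro h
    induction w1 generalizing c with
    | nil => exact ⟨c, Run.nil c, by simpa using h⟩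
    | cons e w1 ih =>
        rw [List.cons_append] at h
        cases h with
        | cons hstep hrun =>
            obtain ⟨c', h1, h2⟩ := ih hrun
            exact ⟨c', Run.cons hstep h1, h2⟩
  · rintro ⟨c', h1, h2⟩
    induction h1 with
    | nil => simpa using h2
    | cons hstep _ ih => exact Run.cons hstep (ih h2)

lemma run_times {c c' : TAConfig Q X} {w : List (A × ℝ)} (h : Aut.Run c w c') :
    ∀ p ∈ w, c.2.2 ≤ p.2 := by
  induction h with
  | nil => intro p hp; simp at hp
  | cons hstep hrun ih =>
      intro p hp
      rcases List.mem_cons.mp hp with hp | hp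
      · rw [hp]; exact hstep.2.1
      · have h1 := ih p hp
        have h2 := hstep.1
        have h3 := hstep.2.1
        rw [h2] at h1
        linarith

lemma run_chain {c c' : TAConfig Q X} {w : List (A × ℝ)} (h : Aut.Run c w c') :
    (w.map Prod.snd).Chain' (· ≤ ·) := by
  induction h with
  | nil => exact List.IsChain.nil
  | cons hstep hrun ih =>
      rw [List.map_cons]
      apply List.isChain_cons.mpr
      refine ⟨?_, ih⟩
      intro y hy
      obtain ⟨p, hp, hps⟩ := List.mem_map.mp (List.mem_of_mem_head? hy)
      have h2 : _ ≤ p.2 := run_times hrun p hp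
      rw [hstep.1] at h2
      rw [← hps]
      exact h2

lemma run_end_time {c c' : TAConfig Q X} {w : List (A × ℝ)} {e : A × ℝ}
    (h : Aut.Run c (w ++ [e]) c') : c'.2.2 = e.2 := by
  obtain ⟨c1, _, h2⟩ := run_append_iff.mp h
  cases h2 with
  | cons hstep hrun =>
      cases hrun with
      | nil => exact hstep.1

lemma run_resets {c c' : TAConfig Q X} {w : List (A × ℝ)} (h : Aut.Run c w c') :
    ∀ x, c'.2.1 x = c.2.1 x ∨ ∃ p ∈ w, c'.2.1 x = p.2 := by
  induction h with
  | nil => intro x; exact Or.inl rfl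
  | @cons c c1 c2 e w hstep hrun ih =>
      intro x
      rcases ih x with h1 | ⟨p, hp, h2⟩
      · obtain ⟨_, _, φ, Y, _, _, hres1, hres2⟩ := hstep
        by_cases hx : x ∈ Y
        · exact Or.inr ⟨e, List.mem_cons_self, by rw [h1]; exact hres1 x hx⟩
        · exact Or.inl (by rw [h1]; exact hres2 x hx)
      · exact Or.inr ⟨p, List.mem_cons_of_mem e hp, h2⟩

lemma mem_lang_isTimedWord {w : List (A × ℝ)} (h : w ∈ Aut.Lang) : IsTimedWord w := by
  obtain ⟨p, hp, c', hrun, _⟩ := h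
  exact ⟨fun e he => run_times hrun e he, run_chain hrun⟩

/-! Determinism: unique runs. -/

lemma step_det (hdet : Aut.IsDeterministic) {c d1 d2 : TAConfig Q X} {e : A × ℝ}
    (h1 : Aut.Step c e d1) (h2 : Aut.Step c e d2) : d1 = d2 := by
  obtain ⟨ht1, _, φ1, Y1, hr1, hs1, hres1, hres1'⟩ := h1
  obtain ⟨ht2, _, φ2, Y2, hr2, hs2, hres2, hres2'⟩ := h2
  obtain ⟨hY, hq⟩ := hdet.2 _ _ _ _ _ _ _ _ hr1 hr2 ⟨_, hs1, hs2⟩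
  have hres : d1.2.1 = d2.2.1 := by
    funext x
    by_cases hx : x ∈ Y1
    · rw [hres1 x hx, hres2 x (hY ▸ hx)]
    · rw [hres1' x hx, hres2' x (fun hc => hx (hY ▸ hc))]
  have : d1.2 = d2.2 := Prod.ext hres (by rw [ht1, ht2])
  exact Prod.ext (by rw [hq]) this

lemma run_det (hdet : Aut.IsDeterministic) {c d1 d2 : TAConfig Q X}
    {w : List (A × ℝ)} (h1 : Aut.Run c w d1) (h2 : Aut.Run c w d2) : d1 = d2 := by
  induction w generalizing c with
  | nil => cases h1; cases h2; rfl
  | cons e w ih =>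
      cases h1 with
      | cons hstep1 hrun1 =>
          cases h2 with
          | cons hstep2 hrun2 =>
              have := step_det hdet hstep1 hstep2
              rw [← this] at hrun2
              exact ih hrun1 hrun2

/-! Invariance of runs under ℤ-fixing automorphisms. -/

def mapCfg (π : ℝ → ℝ) (c : TAConfig Q X) : TAConfig Q X :=
  (c.1, fun x => π (c.2.1 x), π c.2.2)

lemma step_map {π : ℝ → ℝ} (hπ : IsZA π) {c d : TAConfig Q X} {e : A × ℝ}
    (h : Aut.Step c e d) : Aut.Step (mapCfg π c) (e.1, π e.2) (mapCfg π d) := by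
  obtain ⟨ht, hle, φ, Y, hr, hs, hres, hres'⟩ := h
  refine ⟨by simp [mapCfg, ht], by simp only [mapCfg]; exact hπ.le_iff.mpr hle,
    φ, Y, hr, ?_, ?_, ?_⟩
  · have := (hπ.sat_val e.2 c.2.1 φ).mpr hs
    exact this
  · intro x hx
    simp only [mapCfg]
    rw [hres x hx]
  · intro x hx
    simp only [mapCfg]
    rw [hres' x hx]

lemma run_map {π : ℝ → ℝ} (hπ : IsZA π) {c d : TAConfig Q X} {w : List (A × ℝ)}
    (h : Aut.Run c w d) : Aut.Run (mapCfg π c) (mapTW π w) (mapCfg π d) := by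
  induction h with
  | nil => exact Run.nil _
  | cons hstep hrun ih =>
      rw [mapTW_cons]
      exact Run.cons (step_map hπ hstep) ih

lemma lang_map_iff {π : ℝ → ℝ} (hπ : IsZA π) {w : List (A × ℝ)} :
    w ∈ Aut.Lang ↔ mapTW π w ∈ Aut.Lang := by
  have key : ∀ (σ : ℝ → ℝ), IsZA σ → ∀ v : List (A × ℝ), v ∈ Aut.Lang →
      mapTW σ v ∈ Aut.Lang := by
    intro σ hσ v ⟨p, hp, c', hrun, hfin⟩
    refine ⟨p, hp, mapCfg σ c', ?_, hfin⟩
    have h0 : mapCfg σ ((p, fun _ => 0, 0) : TAConfig Q X) = (p, fun _ => 0, 0) := by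
      simp [mapCfg, hσ.2]
    rw [← h0]
    exact run_map hσ hrun
  constructor
  · exact key π hπ w
  · intro h
    obtain ⟨σ, hσ, hl, hr⟩ := hπ.inv
    have := key σ hσ _ h
    rwa [mapTW_leftinv hl] at this

end generic

end UICD
namespace UICD

section comp

open Classical

variable {A B : Type*}

/-- Left part of a composed word. -/
def encL (v : List (A × ℝ)) : List ((A ⊕ Unit ⊕ B) × ℝ) :=
  v.map fun p => (Sum.inl p.1, p.2)

/-- Right (shifted) part of a composed word. -/
def encR (t : ℝ) (m : List (B × ℝ)) : List ((A ⊕ Unit ⊕ B) × ℝ) :=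
  m.map fun p => (Sum.inr (Sum.inr p.1), p.2 + t)

/-- The separator. -/
def dollar (t : ℝ) : (A ⊕ Unit ⊕ B) × ℝ := (Sum.inr (Sum.inl ()), t)

/-- A composed word. -/
def cw (v : List (A × ℝ)) (t : ℝ) (m : List (B × ℝ)) : List ((A ⊕ Unit ⊕ B) × ℝ) :=
  encL v ++ dollar t :: encR t m

lemma append_cons_eq {α : Type*} (P : α → Prop) {l1 l1' l2 l2' : List α} {x x' : α}
    (h : l1 ++ x :: l2 = l1' ++ x' :: l2') (h1 : ∀ y ∈ l1, P y) (h1' : ∀ y ∈ l1', P y)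
    (hx : ¬ P x) (hx' : ¬ P x') : l1 = l1' ∧ x = x' ∧ l2 = l2' := by
  induction l1 generalizing l1' with
  | nil =>
      cases l1' with
      | nil =>
          simp only [List.nil_append, List.cons.injEq] at h
          exact ⟨rfl, h.1, h.2⟩
      | cons a l =>
          simp only [List.nil_append, List.cons_append, List.cons.injEq] at h
          exact absurd (h.1 ▸ h1' a (List.mem_cons_self)) hx
  | cons a l ih =>
      cases l1' with
      | nil =>
          simp only [List.cons_append, List.nil_append, List.cons.injEq] at h
          exact absurd (h.1.symm ▸ h1 a (List.mem_cons_self)) hx'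
      | cons a' l' =>
          simp only [List.cons_append, List.cons.injEq] at h
          obtain ⟨rfl, hrest⟩ := h
          obtain ⟨he1, he2, he3⟩ := ih hrest (fun y hy => h1 y (List.mem_cons_of_mem a hy))
            (fun y hy => h1' y (List.mem_cons_of_mem a hy))
          exact ⟨by rw [he1], he2, he3⟩

lemma encL_inj {v v' : List (A × ℝ)} (h : (encL v : List ((A ⊕ Unit ⊕ B) × ℝ)) = encL v') :
    v = v' := by
  apply List.map_injective_iff.mpr _ h
  intro p p' hpp
  simp only [Prod.mk.injEq] at hpp
  exact Prod.ext (Sum.inl_injective hpp.1) hpp.2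

lemma encR_inj {t : ℝ} {m m' : List (B × ℝ)}
    (h : (encR t m : List ((A ⊕ Unit ⊕ B) × ℝ)) = encR t m') : m = m' := by
  apply List.map_injective_iff.mpr _ h
  intro p p' hpp
  simp only [Prod.mk.injEq] at hpp
  exact Prod.ext (Sum.inr_injective (Sum.inr_injective hpp.1)) (by linarith [hpp.2])

lemma cw_eq_cw {v v' : List (A × ℝ)} {t t' : ℝ} {m m' : List (B × ℝ)}
    (h : cw v t m = cw v' t' m') : v = v' ∧ t = t' ∧ m = m' := by
  have key := append_cons_eq (fun y : (A ⊕ Unit ⊕ B) × ℝ => ∃ a : A, y.1 = Sum.inl a) h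
    (by rintro y hy; obtain ⟨p, _, rfl⟩ := List.mem_map.mp hy; exact ⟨p.1, rfl⟩)
    (by rintro y hy; obtain ⟨p, _, rfl⟩ := List.mem_map.mp hy; exact ⟨p.1, rfl⟩)
    (by rintro ⟨a, ha⟩; simp [dollar] at ha)
    (by rintro ⟨a, ha⟩; simp [dollar] at ha)
  obtain ⟨he1, he2, he3⟩ := key
  have ht : t = t' := congrArg Prod.snd he2
  refine ⟨encL_inj he1, ht, ?_⟩
  rw [← ht] at he3
  exact encR_inj he3

lemma map_snd_encL (v : List (A × ℝ)) :
    (encL v : List ((A ⊕ Unit ⊕ B) × ℝ)).map Prod.snd = v.map Prod.snd := by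
  simp [encL]

lemma map_snd_encR (t : ℝ) (m : List (B × ℝ)) :
    (encR t m : List ((A ⊕ Unit ⊕ B) × ℝ)).map Prod.snd =
      (m.map Prod.snd).map (fun u => u + t) := by
  simp [encR]

lemma chain_le_iff {t : ℝ} {l : List ℝ} :
    List.Chain (· ≤ ·) t l ↔ (∀ x ∈ l, t ≤ x) ∧ l.Chain' (· ≤ ·) := by
  show List.IsChain _ (t :: l) ↔ _ ∧ List.IsChain _ l
  rw [List.isChain_iff_pairwise, List.isChain_iff_pairwise, List.pairwise_cons]

lemma isTimedWord_cw {v : List (A × ℝ)} {t : ℝ} {m : List (B × ℝ)}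
    (hv : IsTimedWord v) (hvt : ∀ p ∈ v, p.2 ≤ t) (ht : 0 ≤ t) (hm : IsTimedWord m) :
    IsTimedWord (cw v t m : List ((A ⊕ Unit ⊕ B) × ℝ)) := by
  constructor
  · intro p hp
    rw [cw] at hp
    rcases List.mem_append.mp hp with hp | hp
    · obtain ⟨p', hp', rfl⟩ := List.mem_map.mp hp
      exact hv.1 p' hp'
    · rcases List.mem_cons.mp hp with hp | hp
      · rw [hp]; exact ht
      · obtain ⟨p', hp', rfl⟩ := List.mem_map.mp hp
        have := hm.1 p' hp'
        simp only
        linarith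
  · rw [cw, List.map_append]
    apply List.isChain_append.mpr
    refine ⟨by rw [map_snd_encL]; exact hv.2, ?_, ?_⟩
    · simp only [List.map_cons]
      apply List.isChain_cons.mpr
      constructor
      · intro y hy
        rw [map_snd_encR] at hy
        obtain ⟨u, hu, rfl⟩ := List.mem_map.mp (List.mem_of_mem_head? hy)
        obtain ⟨p', hp', rfl⟩ := List.mem_map.mp hu
        have := hm.1 p' hp'
        show (dollar t : (A ⊕ Unit ⊕ B) × ℝ).2 ≤ p'.2 + t
        show t ≤ p'.2 + t
        linarith
      · rw [map_snd_encR]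
        apply List.isChain_map_of_isChain _ _ hm.2
        intro a b hab
        simpa using hab
    · intro x hx y hy
      rw [map_snd_encL] at hx
      simp only [List.map_cons, List.head?_cons, Option.mem_some_iff] at hy
      obtain ⟨p', hp', rfl⟩ := List.mem_map.mp (List.mem_of_mem_getLast? hx)
      rw [← hy]
      exact hvt p' hp'

lemma mem_compLang_cw {P : Set (List (A × ℝ))} {K : Set (List (B × ℝ))}
    {v : List (A × ℝ)} {t : ℝ} {m : List (B × ℝ)} :
    (cw v t m ∈ compLang P K) ↔ (v ∈ P ∧ m ∈ K ∧ IsTimedWord (cw v t m)) := by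
  constructor
  · rintro ⟨v', hv', t', m', hm', heq, hitw⟩
    obtain ⟨rfl, rfl, rfl⟩ := cw_eq_cw (v' := v') (t' := t') (m' := m') heq
    exact ⟨hv', hm', hitw⟩
  · rintro ⟨hv, hm, hitw⟩
    exact ⟨v, hv, t, m, hm, rfl, hitw⟩

/-- Quotient of the composed language by a fixed prefix `v $`. -/
lemma mem_N_iff {L' : Set (List (A × ℝ))} {M' : Set (List (B × ℝ))}
    (hM' : M' ⊆ TW B) {v : List (A × ℝ)} (hv : v ∈ TW A) {t : ℝ} (ht : 0 ≤ t)
    (hvt : ∀ p ∈ v, p.2 ≤ t) (m : List (B × ℝ)) :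
    (cw v t m ∈ compLang L' (TW B) ∪ compLang (TW A) M') ↔
      (m ∈ if v ∈ L' then TW B else M') := by
  by_cases hvL : v ∈ L'
  · rw [if_pos hvL]
    constructor
    · rintro (h | h)
      · exact (mem_compLang_cw.mp h).2.1
      · exact hM' (mem_compLang_cw.mp h).2.1
    · intro hm
      exact Or.inl (mem_compLang_cw.mpr ⟨hvL, hm, isTimedWord_cw hv hvt ht hm⟩)
  · rw [if_neg hvL]
    constructor
    · rintro (h | h)
      · exact absurd (mem_compLang_cw.mp h).1 hvL
      · exact (mem_compLang_cw.mp h).2.1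
    · intro hm
      exact Or.inr (mem_compLang_cw.mpr ⟨hv, hm, isTimedWord_cw hv hvt ht (hM' hm)⟩)

lemma compLang_mono_right {P : Set (List (A × ℝ))} {K K' : Set (List (B × ℝ))}
    (h : K ⊆ K') : compLang P K ⊆ compLang P K' := by
  rintro w ⟨v, hv, t, m, hm, heq, hitw⟩
  exact ⟨v, hv, t, m, h hm, heq, hitw⟩

end comp

end UICD
namespace UICD

open TimedAutomaton

lemma chain'_head_le {x : ℝ} {l : List ℝ} (h : List.Chain' (· ≤ ·) (x :: l)) :
    (∀ y ∈ l, x ≤ y) ∧ l.Chain' (· ≤ ·) := by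
  change List.IsChain _ (x :: l) at h
  rw [List.isChain_iff_pairwise, List.pairwise_cons] at h
  exact ⟨h.1, List.isChain_iff_pairwise.mpr h.2⟩

/-- Raw right-part encoding (unshifted). -/
def encRR {A B : Type*} (mm : List (B × ℝ)) : List ((A ⊕ Unit ⊕ B) × ℝ) :=
  mm.map (fun p => (Sum.inr (Sum.inr p.1), p.2))

lemma encRR_nil {A B : Type*} : (encRR [] : List ((A ⊕ Unit ⊕ B) × ℝ)) = [] := rfl

lemma encRR_cons {A B : Type*} (p : B × ℝ) (mm : List (B × ℝ)) :
    (encRR (p :: mm) : List ((A ⊕ Unit ⊕ B) × ℝ)) =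
      (Sum.inr (Sum.inr p.1), p.2) :: encRR mm := rfl

lemma map_snd_encRR {A B : Type*} (mm : List (B × ℝ)) :
    (encRR mm : List ((A ⊕ Unit ⊕ B) × ℝ)).map Prod.snd = mm.map Prod.snd := by
  simp [encRR]

lemma encL_cons {A B : Type*} (p : A × ℝ) (v : List (A × ℝ)) :
    (encL (p :: v) : List ((A ⊕ Unit ⊕ B) × ℝ)) = (Sum.inl p.1, p.2) :: encL v := rfl

section auts

variable (A B : Type) (k : ℕ)

/-! ### The universal automaton -/

def trivAut : TimedAutomaton A Unit (Fin k) where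
  init := {()}
  final := Set.univ
  rules := {r | ∃ a, r = ((), a, .tt, ∅, ())}

lemma trivAut_det : (trivAut A k).IsDeterministic := by
  constructor
  · exact ⟨(), rfl, fun p _ => rfl⟩
  · rintro p a φ Y q φ' Y' q' ⟨a1, h1⟩ ⟨a2, h2⟩ -
    simp only [Prod.mk.injEq] at h1 h2
    exact ⟨h1.2.2.2.1.trans h2.2.2.2.1.symm, rfl⟩

lemma trivAut_run_exists (w : List (A × ℝ)) :
    ∀ (ν : Fin k → ℝ) (t : ℝ), (∀ p ∈ w, t ≤ p.2) → (w.map Prod.snd).Chain' (· ≤ ·) →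
    ∃ c', (trivAut A k).Run ((), ν, t) w c' := by
  induction w with
  | nil => exact fun ν t _ _ => ⟨_, Run.nil _⟩
  | cons e w ih =>
      intro ν t hts hch
      rw [List.map_cons] at hch
      obtain ⟨hle, hch'⟩ := chain'_head_le hch
      have hstep : (trivAut A k).Step ((), ν, t) e ((), ν, e.2) := by
        refine ⟨rfl, hts e (List.mem_cons_self), .tt, ∅, ⟨e.1, rfl⟩, trivial, ?_, ?_⟩
        · intro x hx; exact absurd hx (Set.notMem_empty x)
        · intro x _; rfl
      obtain ⟨c', hrun⟩ := ih ν e.2 (fun p hp => hle p.2 (List.mem_map_of_mem (f := Prod.snd) hp)) hch'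
      exact ⟨c', Run.cons hstep hrun⟩

lemma trivAut_lang : (trivAut A k).Lang = TW A := by
  ext w
  constructor
  · exact fun h => mem_lang_isTimedWord h
  · rintro ⟨h1, h2⟩
    obtain ⟨c', hrun⟩ := trivAut_run_exists A k w (fun _ => 0) 0 (fun p hp => h1 p hp) h2
    exact ⟨(), rfl, c', hrun, trivial⟩

lemma recognisable_TW : RecognisableByDTA k (TW A) :=
  ⟨Unit, inferInstance, trivAut A k, trivAut_det A k, trivAut_lang A k⟩

/-! ### The empty automaton -/

def emptyAut : TimedAutomaton A Unit (Fin k) where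
  init := {()}
  final := ∅
  rules := ∅

lemma recognisable_empty : RecognisableByDTA k (∅ : Set (List (A × ℝ))) := by
  refine ⟨Unit, inferInstance, emptyAut A k, ?_, ?_⟩
  · exact ⟨⟨(), rfl, fun p _ => rfl⟩, fun p a φ Y q φ' Y' q' h => absurd h (Set.notMem_empty _)⟩
  · ext w
    simp only [Set.mem_empty_iff_false, iff_false]
    rintro ⟨p, _, c', _, hfin⟩
    exact absurd hfin (Set.notMem_empty _)

/-! ### The shape automaton -/

def shapeAut : TimedAutomaton (A ⊕ Unit ⊕ B) Bool (Fin k) where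
  init := {false}
  final := {true}
  rules := {r | (∃ a : A, r = (false, Sum.inl a, .tt, ∅, false)) ∨
                r = (false, Sum.inr (Sum.inl ()), .tt, ∅, true) ∨
                (∃ b : B, r = (true, Sum.inr (Sum.inr b), .tt, ∅, true))}

lemma shapeAut_det : (shapeAut A B k).IsDeterministic := by
  constructor
  · exact ⟨false, rfl, fun p hp => hp⟩
  · rintro p a φ Y q φ' Y' q' h1 h2 -
    rcases h1 with ⟨a1, he1⟩ | he1 | ⟨b1, he1⟩ <;>
      rcases h2 with ⟨a2, he2⟩ | he2 | ⟨b2, he2⟩ <;>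
      simp only [Prod.mk.injEq] at he1 he2 <;>
      obtain ⟨hp1, ha1, hφ1, hY1, hq1⟩ := he1 <;>
      obtain ⟨hp2, ha2, hφ2, hY2, hq2⟩ := he2 <;>
      subst_vars <;> simp_all

lemma shape_true_decomp {c c' : TAConfig Bool (Fin k)} {w : List ((A ⊕ Unit ⊕ B) × ℝ)}
    (h : (shapeAut A B k).Run c w c') : c.1 = true → ∃ mm : List (B × ℝ), w = encRR mm := by
  induction h with
  | nil => exact fun _ => ⟨[], rfl⟩
  | @cons c c1 c2 e w hstep hrun ih =>
      intro hc
      obtain ⟨_, _, φ, Y, hr, _, _, _⟩ := hstep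
      rcases hr with ⟨a1, he⟩ | he | ⟨b1, he⟩ <;> simp only [Prod.mk.injEq] at he
      · rw [hc] at he; exact absurd he.1 (by simp)
      · rw [hc] at he; exact absurd he.1 (by simp)
      · obtain ⟨mm, hmm⟩ := ih (by rw [he.2.2.2.2])
        refine ⟨(b1, e.2) :: mm, ?_⟩
        rw [encRR_cons, ← hmm, ← he.2.1]

lemma shape_false_decomp {c c' : TAConfig Bool (Fin k)} {w : List ((A ⊕ Unit ⊕ B) × ℝ)}
    (h : (shapeAut A B k).Run c w c') : c.1 = false → c'.1 = true →
    ∃ (v : List (A × ℝ)) (t' : ℝ) (mm : List (B × ℝ)),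
      w = encL v ++ dollar t' :: encRR mm := by
  induction h with
  | nil =>
      intro hc hc'
      rw [hc] at hc'; exact absurd hc' (by simp)
  | @cons c c1 c2 e w hstep hrun ih =>
      intro hc hc'
      obtain ⟨_, _, φ, Y, hr, _, _, _⟩ := hstep
      rcases hr with ⟨a1, he⟩ | he | ⟨b1, he⟩ <;> simp only [Prod.mk.injEq] at he
      · obtain ⟨v, t', mm, hvm⟩ := ih (by rw [he.2.2.2.2]) hc'
        refine ⟨(a1, e.2) :: v, t', mm, ?_⟩
        rw [encL_cons, List.cons_append, ← hvm, ← he.2.1]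
      · obtain ⟨mm, hmm⟩ := shape_true_decomp A B k hrun (by rw [he.2.2.2.2])
        refine ⟨[], e.2, mm, ?_⟩
        rw [encL, List.map_nil, List.nil_append, ← hmm, dollar, ← he.2.1]
      · rw [hc] at he; exact absurd he.1 (by simp)

lemma shape_true_run_exists (mm : List (B × ℝ)) :
    ∀ (ν : Fin k → ℝ) (t : ℝ),
      (∀ p ∈ (encRR mm : List ((A ⊕ Unit ⊕ B) × ℝ)), t ≤ p.2) →
      ((encRR mm : List ((A ⊕ Unit ⊕ B) × ℝ)).map Prod.snd).Chain' (· ≤ ·) →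
    ∃ c', (shapeAut A B k).Run (true, ν, t) (encRR mm) c' ∧ c'.1 = true := by
  induction mm with
  | nil => exact fun ν t _ _ => ⟨_, Run.nil _, rfl⟩
  | cons e mm ih =>
      intro ν t hts hch
      rw [encRR_cons] at hts hch ⊢
      rw [List.map_cons] at hch
      obtain ⟨hle, hch'⟩ := chain'_head_le hch
      have hstep : (shapeAut A B k).Step (true, ν, t) (Sum.inr (Sum.inr e.1), e.2)
          (true, ν, e.2) := by
        refine ⟨rfl, hts _ (List.mem_cons_self), .tt, ∅,
          Or.inr (Or.inr ⟨e.1, rfl⟩), trivial, ?_, ?_⟩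
        · intro x hx; exact absurd hx (Set.notMem_empty x)
        · intro x _; rfl
      obtain ⟨c', hrun, hfin⟩ := ih ν e.2
        (fun p hp => hle p.2 (List.mem_map_of_mem (f := Prod.snd) hp)) hch'
      exact ⟨c', Run.cons hstep hrun, hfin⟩

lemma shape_false_run_exists (v : List (A × ℝ)) (t' : ℝ) (mm : List (B × ℝ)) :
    ∀ (ν : Fin k → ℝ) (t : ℝ),
      (∀ p ∈ (encL v ++ dollar t' :: encRR mm : List ((A ⊕ Unit ⊕ B) × ℝ)), t ≤ p.2) →
      ((encL v ++ dollar t' :: encRR mm : List ((A ⊕ Unit ⊕ B) × ℝ)).map Prod.snd).Chain' (· ≤ ·) →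
    ∃ c', (shapeAut A B k).Run (false, ν, t) (encL v ++ dollar t' :: encRR mm) c' ∧
      c'.1 = true := by
  induction v with
  | nil =>
      intro ν t hts hch
      rw [encL, List.map_nil, List.nil_append] at hts hch ⊢
      rw [List.map_cons] at hch
      obtain ⟨hle, hch'⟩ := chain'_head_le hch
      have hstep : (shapeAut A B k).Step (false, ν, t) (dollar t') (true, ν, t') := by
        refine ⟨rfl, hts (dollar t') (List.mem_cons_self), .tt, ∅,
          Or.inr (Or.inl rfl), trivial, ?_, ?_⟩
        · intro x hx; exact absurd hx (Set.notMem_empty x)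
        · intro x _; rfl
      obtain ⟨c', hrun, hfin⟩ := shape_true_run_exists A B k mm ν t'
        (fun p hp => hle p.2 (List.mem_map_of_mem (f := Prod.snd) hp)) hch'
      exact ⟨c', Run.cons hstep hrun, hfin⟩
  | cons e v ih =>
      intro ν t hts hch
      rw [encL_cons, List.cons_append] at hts hch ⊢
      rw [List.map_cons] at hch
      obtain ⟨hle, hch'⟩ := chain'_head_le hch
      have hstep : (shapeAut A B k).Step (false, ν, t) (Sum.inl e.1, e.2)
          (false, ν, e.2) := by
        refine ⟨rfl, hts _ (List.mem_cons_self), .tt, ∅,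
          Or.inl ⟨e.1, rfl⟩, trivial, ?_, ?_⟩
        · intro x hx; exact absurd hx (Set.notMem_empty x)
        · intro x _; rfl
      obtain ⟨c', hrun, hfin⟩ := ih ν e.2
        (fun p hp => hle p.2 (List.mem_map_of_mem (f := Prod.snd) hp)) hch'
      exact ⟨c', Run.cons hstep hrun, hfin⟩

lemma shape_lang : (shapeAut A B k).Lang = compLang (TW A) (TW B) := by
  ext w
  constructor
  · rintro ⟨p, hp, c', hrun, hfin⟩
    have hp' : p = false := hp
    subst hp'
    have hitw : IsTimedWord w := ⟨fun e he => run_times hrun e he, run_chain hrun⟩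
    obtain ⟨v, t', mm, rfl⟩ := shape_false_decomp A B k hrun rfl hfin
    set m : List (B × ℝ) := mm.map (fun p => (p.1, p.2 - t')) with hm
    have henc : (encRR mm : List ((A ⊕ Unit ⊕ B) × ℝ)) = encR t' m := by
      rw [hm, encR, List.map_map, encRR]
      apply List.map_congr_left
      intro p _
      simp
    have hsnd : (encL v ++ dollar t' :: encRR mm : List ((A ⊕ Unit ⊕ B) × ℝ)).map Prod.snd
        = (v.map Prod.snd) ++ t' :: (mm.map Prod.snd) := by
      rw [List.map_append, map_snd_encL, List.map_cons, map_snd_encRR]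
      rfl
    have hch := hitw.2
    rw [hsnd] at hch
    have hch2 := (List.isChain_append.mp hch).2.1
    obtain ⟨hle, hchmm⟩ := chain'_head_le hch2
    refine ⟨v, ⟨?_, ?_⟩, t', m, ⟨?_, ?_⟩, ?_, hitw⟩
    · intro p hp2
      exact hitw.1 (Sum.inl p.1, p.2) (by
        apply List.mem_append_left
        exact List.mem_map_of_mem (f := _) hp2)
    · exact (List.isChain_append.mp hch).1
    · intro p hp2
      rw [hm] at hp2
      obtain ⟨p', hp', rfl⟩ := List.mem_map.mp hp2
      have : t' ≤ p'.2 := hle p'.2 (List.mem_map_of_mem (f := Prod.snd) hp')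
      simp only
      linarith
    · rw [hm, List.map_map]
      rw [show (Prod.snd ∘ fun p : B × ℝ => (p.1, p.2 - t')) = (fun r => r - t') ∘ Prod.snd
        from rfl, ← List.map_map]
      exact List.isChain_map_of_isChain _ (fun a b hab => by simpa using hab) hchmm
    · show _ = cw v t' m
      rw [cw, ← henc]
  · rintro ⟨v, hv, t', m, hm, rfl, hitw⟩
    have hww : (List.map (fun p : A × ℝ => ((Sum.inl p.1 : A ⊕ Unit ⊕ B), p.2)) v ++
        ((Sum.inr (Sum.inl ()) : A ⊕ Unit ⊕ B), t') ::
          List.map (fun p : B × ℝ => ((Sum.inr (Sum.inr p.1) : A ⊕ Unit ⊕ B), p.2 + t')) m)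
        = encL v ++ dollar t' :: encRR (m.map (fun p => (p.1, p.2 + t'))) := by
      rw [encRR, List.map_map]
      rfl
    rw [hww] at hitw ⊢
    obtain ⟨c', hrun, hfin⟩ := shape_false_run_exists A B k v t' _ (fun _ => 0) 0
      hitw.1 hitw.2
    exact ⟨false, rfl, c', hrun, hfin⟩

end auts

end UICD
namespace UICD

open TimedAutomaton

noncomputable section

open Classical

/-! ### Rounded atoms -/

def atomUp {X : Type*} (mk : CmpOp → ℤ → ClockConstraint X) (c : CmpOp) (n : ℤ) :
    ClockConstraint X :=
  match c with
  | .lt => mk .le n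
  | .le => mk .le n
  | .eq => .ff
  | .ge => mk .gt n
  | .gt => mk .gt n

def atomDn {X : Type*} (mk : CmpOp → ℤ → ClockConstraint X) (c : CmpOp) (n : ℤ) :
    ClockConstraint X :=
  match c with
  | .lt => mk .lt n
  | .le => mk .lt n
  | .eq => .ff
  | .ge => mk .ge n
  | .gt => mk .ge n

lemma holds_round_up {ε V r : ℝ} (hε1 : ε ≤ 1) (n : ℤ) (h1 : (n:ℝ) < r)
    (h2 : r < n + ε) (hv : Gd ε V) (c : CmpOp) {X : Type*} (v : X → ℝ)
    (mk : CmpOp → ℤ → ClockConstraint X)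
    (hmk : ∀ c' n', ClockConstraint.sat v (mk c' n') ↔ CmpOp.holds c' V (n':ℝ)) :
    CmpOp.holds c V r ↔ ClockConstraint.sat v (atomUp mk c n) := by
  obtain ⟨e1, e2, e3, e4, e5⟩ := round_above hε1 n h1 h2 hv
  cases c
  · rw [show atomUp mk .lt n = mk .le n from rfl, hmk]
    exact e1.trans (by simp [CmpOp.holds])
  · rw [show atomUp mk .le n = mk .le n from rfl, hmk]
    exact e2.trans (by simp [CmpOp.holds])
  · rw [show atomUp mk .eq n = .ff from rfl]
    simp only [ClockConstraint.sat]
    exact iff_false_intro e3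
  · rw [show atomUp mk .ge n = mk .gt n from rfl, hmk]
    show r ≤ V ↔ _
    rw [← e4]
    simp [CmpOp.holds]
  · rw [show atomUp mk .gt n = mk .gt n from rfl, hmk]
    show r < V ↔ _
    rw [← e5]
    simp [CmpOp.holds]

lemma holds_round_dn {ε V r : ℝ} (hε1 : ε ≤ 1) (n : ℤ) (h1 : (n:ℝ) - ε < r)
    (h2 : r < n) (hv : Gd ε V) (c : CmpOp) {X : Type*} (v : X → ℝ)
    (mk : CmpOp → ℤ → ClockConstraint X)
    (hmk : ∀ c' n', ClockConstraint.sat v (mk c' n') ↔ CmpOp.holds c' V (n':ℝ)) :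
    CmpOp.holds c V r ↔ ClockConstraint.sat v (atomDn mk c n) := by
  obtain ⟨e1, e2, e3, e4, e5⟩ := round_below hε1 n h1 h2 hv
  cases c
  · rw [show atomDn mk .lt n = mk .lt n from rfl, hmk]
    exact e1.trans (by simp [CmpOp.holds])
  · rw [show atomDn mk .le n = mk .lt n from rfl, hmk]
    exact e2.trans (by simp [CmpOp.holds])
  · rw [show atomDn mk .eq n = .ff from rfl]
    simp only [ClockConstraint.sat]
    exact iff_false_intro e3
  · rw [show atomDn mk .ge n = mk .ge n from rfl, hmk]
    show r ≤ V ↔ _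
    rw [← e4]
    simp [CmpOp.holds]
  · rw [show atomDn mk .gt n = mk .ge n from rfl, hmk]
    show r < V ↔ _
    rw [← e5]
    simp [CmpOp.holds]

/-! ### The guard translation -/

variable {k : ℕ}

def Tr (μ : Fin k → ℝ) (t0 : ℤ) (β : Fin k → Bool) :
    ClockConstraint (Fin k) → ClockConstraint (Fin k)
  | .tt => .tt
  | .ff => .ff
  | .not φ => .not (Tr μ t0 β φ)
  | .and φ ψ => .and (Tr μ t0 β φ) (Tr μ t0 β ψ)
  | .or φ ψ => .or (Tr μ t0 β φ) (Tr μ t0 β ψ)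
  | .single x c z =>
      if β x then .single x c z
      else if Int.fract (μ x) = 0 then .single x c (z - t0 + ⌊μ x⌋)
      else atomUp (.single x) c (z - t0 + ⌊μ x⌋)
  | .diff x y c z =>
      if β x then
        (if β y then .diff x y c z
         else if Int.fract (μ y) = 0 then .diff x y c (z + t0 - ⌊μ y⌋)
         else atomDn (.diff x y) c (z + t0 - ⌊μ y⌋))
      else
        (if β y then
          (if Int.fract (μ x) = 0 then .diff x y c (z - t0 + ⌊μ x⌋)
           else atomUp (.diff x y) c (z - t0 + ⌊μ x⌋))
         else (if CmpOp.holds c (μ y - μ x) (z:ℝ) then .tt else .ff))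

/-- The equality constraint on not-yet-reset clocks. -/
def EQc (β : Fin k → Bool) : ClockConstraint (Fin k) :=
  ((List.finRange k).product (List.finRange k)).foldr
    (fun p acc => if β p.1 = false ∧ β p.2 = false
      then .and (.diff p.1 p.2 .eq 0) acc else acc)
    .tt

lemma sat_EQc (β : Fin k → Bool) (v : Fin k → ℝ) :
    ClockConstraint.sat v (EQc β) ↔
      ∀ x y : Fin k, β x = false → β y = false → v x = v y := by
  have gen : ∀ l : List (Fin k × Fin k),
      ClockConstraint.sat v (l.foldr (fun p acc => if β p.1 = false ∧ β p.2 = false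
        then .and (.diff p.1 p.2 .eq 0) acc else acc) .tt) ↔
      ∀ p ∈ l, β p.1 = false → β p.2 = false → v p.1 = v p.2 := by
    intro l
    induction l with
    | nil => simp [ClockConstraint.sat]
    | cons p l ih =>
        rw [List.foldr_cons]
        by_cases hp : β p.1 = false ∧ β p.2 = false
        · rw [if_pos hp]
          simp only [ClockConstraint.sat, List.mem_cons]
          constructor
          · rintro ⟨h1, h2⟩ p' hp' hx hy
            rcases hp' with rfl | hp''
            · have h1' : v p'.1 - v p'.2 = ((0:ℤ):ℝ) := h1
              push_cast at h1'
              linarith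
            · exact (ih.mp h2) p' hp'' hx hy
          · intro h
            refine ⟨?_, ih.mpr (fun p' hp' => h p' (Or.inr hp'))⟩
            have := h p (Or.inl rfl) hp.1 hp.2
            show v p.1 - v p.2 = ((0:ℤ):ℝ)
            push_cast
            linarith
        · rw [if_neg hp]
          rw [ih]
          constructor
          · intro h p' hp'
            rcases List.mem_cons.mp hp' with rfl | hp'
            · intro h1 h2; exact absurd ⟨h1, h2⟩ hp
            · exact h p' hp'
          · intro h p' hp'
            exact h p' (List.mem_cons_of_mem p hp')
  rw [EQc, gen]
  constructor
  · intro h x y hx hy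
    exact h (x, y) (List.pair_mem_product.mpr ⟨List.mem_finRange x, List.mem_finRange y⟩) hx hy
  · intro h p _ hx hy
    exact h p.1 p.2 hx hy

/-! ### Correctness of the translation -/

lemma Tr_correct {μ : Fin k → ℝ} {t0 : ℤ} {ε : ℝ} (hε0 : 0 < ε) (hε1 : ε ≤ 1)
    (hμ : ∀ x, Int.fract (μ x) < ε) (β : Fin k → Bool) (v : Fin k → ℝ)
    (ha : ∀ x y, β x = false → β y = false → v x = v y)
    (hb : ∀ x, β x = false → Gd ε (v x))
    (hc : ∀ x y, β x = false → β y = true → Gd ε (v x - v y))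
    (hc' : ∀ x y, β x = true → β y = false → Gd ε (v x - v y))
    (φ : ClockConstraint (Fin k)) :
    ClockConstraint.sat v (Tr μ t0 β φ) ↔
      ClockConstraint.sat (fun x => if β x then v x else v x + ((t0:ℝ) - μ x)) φ := by
  induction φ with
  | tt => simp [Tr, ClockConstraint.sat]
  | ff => simp [Tr, ClockConstraint.sat]
  | not φ ih => simp only [Tr, ClockConstraint.sat]; rw [ih]
  | and φ ψ ih1 ih2 => simp only [Tr, ClockConstraint.sat]; rw [ih1, ih2]
  | or φ ψ ih1 ih2 => simp only [Tr, ClockConstraint.sat]; rw [ih1, ih2]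
  | single x c z =>
      cases hβx : β x with
      | true =>
          simp only [Tr, hβx, if_true, ClockConstraint.sat]
      | false =>
          have hbx : Gd ε (v x) := hb x hβx
          simp only [Tr, hβx, Bool.false_eq_true, if_false, ClockConstraint.sat]
          have hrhs : CmpOp.holds c (v x + ((t0:ℝ) - μ x)) (z:ℝ) ↔
              CmpOp.holds c (v x) ((z:ℝ) - t0 + μ x) := by
            rw [CmpOp.holds_shift, show (z:ℝ) - ((t0:ℝ) - μ x) = (z:ℝ) - t0 + μ x by ring]
          by_cases hfr : Int.fract (μ x) = 0
          · rw [if_pos hfr]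
            have hμx : μ x = (⌊μ x⌋ : ℝ) := by
              have := Int.floor_add_fract (μ x)
              rw [hfr, add_zero] at this
              exact this.symm
            have : ((z - t0 + ⌊μ x⌋ : ℤ) : ℝ) = (z:ℝ) - t0 + μ x := by
              push_cast
              rw [← hμx]
            simp only [ClockConstraint.sat]
            rw [this, ← hrhs]
          · rw [if_neg hfr]
            have hpos : 0 < Int.fract (μ x) :=
              lt_of_le_of_ne (Int.fract_nonneg _) (Ne.symm hfr)
            set n : ℤ := z - t0 + ⌊μ x⌋ with hn
            have h1 : (n:ℝ) < (z:ℝ) - t0 + μ x := by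
              rw [hn]
              push_cast
              have := Int.floor_add_fract (μ x)
              linarith [hpos]
            have h2 : (z:ℝ) - t0 + μ x < (n:ℝ) + ε := by
              rw [hn]
              push_cast
              have := Int.floor_add_fract (μ x)
              linarith [hμ x]
            rw [hrhs, holds_round_up hε1 n h1 h2 hbx c v (.single x)
              (fun c' n' => Iff.rfl)]
  | diff x y c z =>
      cases hβx : β x with
      | true =>
          cases hβy : β y with
          | true =>
              simp only [Tr, hβx, hβy, if_true, ClockConstraint.sat]
          | false =>
              have hgd : Gd ε (v x - v y) := hc' x y hβx hβy
              simp only [Tr, hβx, hβy, Bool.false_eq_true, if_true, if_false,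
                ClockConstraint.sat]
              have hrhs : CmpOp.holds c (v x - (v y + ((t0:ℝ) - μ y))) (z:ℝ) ↔
                  CmpOp.holds c (v x - v y) ((z:ℝ) + t0 - μ y) := by
                rw [CmpOp.holds_congr (z:ℝ)
                  (show v x - (v y + ((t0:ℝ) - μ y)) = (v x - v y) + (μ y - (t0:ℝ)) by ring),
                  CmpOp.holds_shift,
                  show (z:ℝ) - (μ y - (t0:ℝ)) = (z:ℝ) + t0 - μ y by ring]
              by_cases hfr : Int.fract (μ y) = 0
              · rw [if_pos hfr]
                have hμy : μ y = (⌊μ y⌋ : ℝ) := by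
                  have := Int.floor_add_fract (μ y)
                  rw [hfr, add_zero] at this
                  exact this.symm
                have : ((z + t0 - ⌊μ y⌋ : ℤ) : ℝ) = (z:ℝ) + t0 - μ y := by
                  push_cast
                  rw [← hμy]
                simp only [ClockConstraint.sat]
                rw [this, ← hrhs]
              · rw [if_neg hfr]
                have hpos : 0 < Int.fract (μ y) :=
                  lt_of_le_of_ne (Int.fract_nonneg _) (Ne.symm hfr)
                set n : ℤ := z + t0 - ⌊μ y⌋ with hn
                have h1 : (n:ℝ) - ε < (z:ℝ) + t0 - μ y := by
                  rw [hn]; push_cast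
                  have := Int.floor_add_fract (μ y)
                  linarith [hμ y]
                have h2 : (z:ℝ) + t0 - μ y < (n:ℝ) := by
                  rw [hn]; push_cast
                  have := Int.floor_add_fract (μ y)
                  linarith [hpos]
                rw [hrhs, holds_round_dn hε1 n h1 h2 hgd c v (.diff x y)
                  (fun c' n' => Iff.rfl)]
      | false =>
          cases hβy : β y with
          | true =>
              have hgd : Gd ε (v x - v y) := hc x y hβx hβy
              simp only [Tr, hβx, hβy, Bool.false_eq_true, if_true, if_false,
                ClockConstraint.sat]
              have hrhs : CmpOp.holds c ((v x + ((t0:ℝ) - μ x)) - v y) (z:ℝ) ↔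
                  CmpOp.holds c (v x - v y) ((z:ℝ) - t0 + μ x) := by
                rw [CmpOp.holds_congr (z:ℝ)
                  (show (v x + ((t0:ℝ) - μ x)) - v y = (v x - v y) + ((t0:ℝ) - μ x) by ring),
                  CmpOp.holds_shift,
                  show (z:ℝ) - ((t0:ℝ) - μ x) = (z:ℝ) - t0 + μ x by ring]
              by_cases hfr : Int.fract (μ x) = 0
              · rw [if_pos hfr]
                have hμx : μ x = (⌊μ x⌋ : ℝ) := by
                  have := Int.floor_add_fract (μ x)
                  rw [hfr, add_zero] at this
                  exact this.symm
                have : ((z - t0 + ⌊μ x⌋ : ℤ) : ℝ) = (z:ℝ) - t0 + μ x := by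
                  push_cast
                  rw [← hμx]
                simp only [ClockConstraint.sat]
                rw [this, ← hrhs]
              · rw [if_neg hfr]
                have hpos : 0 < Int.fract (μ x) :=
                  lt_of_le_of_ne (Int.fract_nonneg _) (Ne.symm hfr)
                set n : ℤ := z - t0 + ⌊μ x⌋ with hn
                have h1 : (n:ℝ) < (z:ℝ) - t0 + μ x := by
                  rw [hn]; push_cast
                  have := Int.floor_add_fract (μ x)
                  linarith [hpos]
                have h2 : (z:ℝ) - t0 + μ x < (n:ℝ) + ε := by
                  rw [hn]; push_cast
                  have := Int.floor_add_fract (μ x)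
                  linarith [hμ x]
                rw [hrhs, holds_round_up hε1 n h1 h2 hgd c v (.diff x y)
                  (fun c' n' => Iff.rfl)]
          | false =>
              simp only [Tr, hβx, hβy, Bool.false_eq_true, if_false,
                ClockConstraint.sat]
              have hval : (v x + ((t0:ℝ) - μ x)) - (v y + ((t0:ℝ) - μ y)) = μ y - μ x := by
                have := ha x y hβx hβy
                linarith
              rw [CmpOp.holds_congr (z:ℝ) hval]
              by_cases hh : CmpOp.holds c (μ y - μ x) (z:ℝ)
              · rw [if_pos hh]
                simp only [ClockConstraint.sat]
                exact ⟨fun _ => hh, fun _ => trivial⟩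
              · rw [if_neg hh]
                simp only [ClockConstraint.sat]
                exact ⟨fun h => h.elim, fun h => absurd h hh⟩

end

end UICD
namespace UICD

open Classical

/-- Any clock valuation can be replaced by one satisfying the same integer clock
constraints whose values and pairwise differences are all `Gd ε`. -/
lemma rank_squeeze {k : ℕ} (ν : Fin k → ℝ) {ε : ℝ} (hε0 : 0 < ε)
    (hε : ε ≤ 1/((k:ℝ)+1)) :
    ∃ ν' : Fin k → ℝ,
      (∀ ψ : ClockConstraint (Fin k), ClockConstraint.sat ν' ψ ↔ ClockConstraint.sat ν ψ) ∧
      (∀ x, Gd ε (ν' x)) ∧ (∀ x y, Gd ε (ν' x - ν' y)) := by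
  classical
  have hK : (0:ℝ) < (k:ℝ) + 1 := by positivity
  set F : Finset ℝ := insert 0 (Finset.image (fun x => Int.fract (ν x)) Finset.univ)
    with hF
  have hmem : ∀ x, Int.fract (ν x) ∈ F := fun x =>
    Finset.mem_insert_of_mem (Finset.mem_image_of_mem _ (Finset.mem_univ x))
  have hFnonneg : ∀ b ∈ F, 0 ≤ b := by
    intro b hb
    rcases Finset.mem_insert.mp hb with rfl | hb
    · exact le_refl 0
    · obtain ⟨x, _, rfl⟩ := Finset.mem_image.mp hb
      exact Int.fract_nonneg _
  have hcard : F.card ≤ k + 1 := by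
    calc F.card ≤ (Finset.image (fun x => Int.fract (ν x)) Finset.univ).card + 1 :=
          Finset.card_insert_le _ _
      _ ≤ (Finset.univ : Finset (Fin k)).card + 1 := by
          have := Finset.card_image_le (f := fun x => Int.fract (ν x))
            (s := (Finset.univ : Finset (Fin k)))
          omega
      _ = k + 1 := by rw [Finset.card_univ, Fintype.card_fin]
  set rk : ℝ → ℕ := fun a => (F.filter (fun b => b < a)).card with hrk
  have rk_mono : ∀ a ∈ F, ∀ b : ℝ, a < b → rk a < rk b := by
    intro a ha b hab
    apply Finset.card_lt_card
    rw [Finset.ssubset_iff_of_subset]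
    · exact ⟨a, Finset.mem_filter.mpr ⟨ha, hab⟩, fun hc => absurd (Finset.mem_filter.mp hc).2
        (lt_irrefl a)⟩
    · intro c hc
      rw [Finset.mem_filter] at hc ⊢
      exact ⟨hc.1, hc.2.trans hab⟩
  have rk_zero : rk 0 = 0 := by
    rw [hrk]
    simp only
    rw [Finset.card_eq_zero, Finset.filter_eq_empty_iff]
    intro b hb
    exact not_lt.mpr (hFnonneg b hb)
  have rk_bound : ∀ a ∈ F, rk a ≤ k := by
    intro a ha
    have hsub : F.filter (fun b => b < a) ⊆ F.erase a := by
      intro c hc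
      rw [Finset.mem_filter] at hc
      exact Finset.mem_erase.mpr ⟨ne_of_lt hc.2, hc.1⟩
    have h2 := Finset.card_le_card hsub
    rw [Finset.card_erase_of_mem ha] at h2
    rw [hrk]
    simp only
    omega
  set j : Fin k → ℕ := fun x => rk (Int.fract (ν x)) with hj
  have j_le : ∀ x, j x ≤ k := fun x => rk_bound _ (hmem x)
  have j_zero : ∀ x, (j x = 0 ↔ Int.fract (ν x) = 0) := by
    intro x
    constructor
    · intro h
      by_contra hne
      have hpos : 0 < Int.fract (ν x) := lt_of_le_of_ne (Int.fract_nonneg _) (Ne.symm hne)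
      have := rk_mono 0 (Finset.mem_insert_self _ _) _ hpos
      rw [rk_zero] at this
      rw [hj] at h
      simp only at h
      omega
    · intro h
      rw [hj]
      simp only
      rw [h, rk_zero]
  have j_lt : ∀ x y : Fin k, (Int.fract (ν x) < Int.fract (ν y) ↔ j x < j y) := by
    intro x y
    constructor
    · intro h; exact rk_mono _ (hmem x) _ h
    · intro h
      rcases lt_trichotomy (Int.fract (ν x)) (Int.fract (ν y)) with h' | h' | h'
      · exact h'
      · rw [hj] at h; simp only at h; rw [h'] at h; omega
      · have := rk_mono _ (hmem y) _ h'
        rw [hj] at h; simp only at h; omega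
  have j_eq : ∀ x y : Fin k, (Int.fract (ν x) = Int.fract (ν y) ↔ j x = j y) := by
    intro x y
    constructor
    · intro h; rw [hj]; simp only; rw [h]
    · intro h
      rcases lt_trichotomy (Int.fract (ν x)) (Int.fract (ν y)) with h' | h' | h'
      · have := (j_lt x y).mp h'; omega
      · exact h'
      · have := (j_lt y x).mp h'; omega
  have hjR : ∀ x, (j x : ℝ) ≤ (k:ℝ) := fun x => by exact_mod_cast j_le x
  set δ : Fin k → ℝ := fun x => (j x : ℝ)/((k:ℝ)+1) with hδ
  have δ_nonneg : ∀ x, 0 ≤ δ x := fun x => by rw [hδ]; positivity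
  have δ_lt_one : ∀ x, δ x < 1 := by
    intro x
    rw [hδ]
    simp only
    rw [div_lt_one hK]
    linarith [hjR x]
  have δ_le : ∀ x, δ x ≤ (k:ℝ)/((k:ℝ)+1) := by
    intro x
    rw [hδ]
    simp only
    exact div_le_div_of_nonneg_right (hjR x) hK.le
  have δ_ge : ∀ x, 1 ≤ j x → 1/((k:ℝ)+1) ≤ δ x := by
    intro x hx
    rw [hδ]
    simp only
    have h1 : (1:ℝ) ≤ (j x : ℝ) := by exact_mod_cast hx
    exact div_le_div_of_nonneg_right h1 hK.le
  have hkK : (k:ℝ)/((k:ℝ)+1) = 1 - 1/((k:ℝ)+1) := by field_simp; ring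
  have δ_sign : ∀ x, (0 < δ x ↔ 0 < Int.fract (ν x)) := by
    intro x
    rw [hδ]
    simp only
    constructor
    · intro h
      rcases eq_or_lt_of_le (Int.fract_nonneg (ν x)) with h' | h'
      · exfalso
        have hz : j x = 0 := (j_zero x).mpr h'.symm
        rw [hz] at h
        simp at h
      · exact h'
    · intro h
      have : j x ≠ 0 := fun hz => absurd ((j_zero x).mp hz) (by linarith)
      have h1 : (1:ℝ) ≤ (j x : ℝ) := by exact_mod_cast Nat.one_le_iff_ne_zero.mpr this
      positivity
  have δ_zero : ∀ x, (δ x = 0 ↔ Int.fract (ν x) = 0) := by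
    intro x
    rw [hδ]
    simp only
    rw [div_eq_zero_iff]
    constructor
    · rintro (h | h)
      · exact (j_zero x).mp (by exact_mod_cast h)
      · linarith
    · intro h
      left
      exact_mod_cast (j_zero x).mpr h
  set ν' : Fin k → ℝ := fun x => (⌊ν x⌋ : ℝ) + δ x with hν'
  refine ⟨ν', ?_, ?_, ?_⟩
  · intro ψ
    induction ψ with
    | tt => simp [ClockConstraint.sat]
    | ff => simp [ClockConstraint.sat]
    | not φ ih => simp only [ClockConstraint.sat]; rw [ih]
    | and φ ψ ih1 ih2 => simp only [ClockConstraint.sat]; rw [ih1, ih2]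
    | or φ ψ ih1 ih2 => simp only [ClockConstraint.sat]; rw [ih1, ih2]
    | single x c z =>
        simp only [ClockConstraint.sat, hν']
        have base := holds_int_frac c z ⌊ν x⌋ (by linarith [δ_nonneg x]) (δ_lt_one x)
          (by linarith [Int.fract_nonneg (ν x)]) (Int.fract_lt_one (ν x))
          (δ_sign x) (δ_zero x)
        rw [Int.floor_add_fract] at base
        exact base
    | diff x y c z =>
        simp only [ClockConstraint.sat, hν']
        have hb1 : -1 < δ x - δ y := by linarith [δ_nonneg x, δ_lt_one y]
        have hb2 : δ x - δ y < 1 := by linarith [δ_nonneg y, δ_lt_one x]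
        have hb3 : -1 < Int.fract (ν x) - Int.fract (ν y) := by
          linarith [Int.fract_nonneg (ν x), Int.fract_lt_one (ν y)]
        have hb4 : Int.fract (ν x) - Int.fract (ν y) < 1 := by
          linarith [Int.fract_nonneg (ν y), Int.fract_lt_one (ν x)]
        have hsign : (0 < δ x - δ y ↔ 0 < Int.fract (ν x) - Int.fract (ν y)) := by
          rw [sub_pos, sub_pos, hδ]
          simp only
          rw [div_lt_div_iff_of_pos_right hK]
          constructor
          · intro h
            have : j y < j x := by exact_mod_cast h
            exact (j_lt y x).mpr this
          · intro h
            have := (j_lt y x).mp h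
            exact_mod_cast this
        have hzero : (δ x - δ y = 0 ↔ Int.fract (ν x) - Int.fract (ν y) = 0) := by
          rw [sub_eq_zero, sub_eq_zero, hδ]
          simp only
          constructor
          · intro h
            field_simp at h
            have : j x = j y := by exact_mod_cast h
            exact (j_eq x y).mpr this
          · intro h
            have h2 := (j_eq x y).mp h
            have h3 : (j x : ℝ) = (j y : ℝ) := by exact_mod_cast h2
            rw [h3]
        have base := holds_int_frac c z (⌊ν x⌋ - ⌊ν y⌋) hb1 hb2 hb3 hb4 hsign hzero
        have e1 : ((⌊ν x⌋ - ⌊ν y⌋ : ℤ) : ℝ) + (δ x - δ y)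
            = ((⌊ν x⌋ : ℝ) + δ x) - ((⌊ν y⌋ : ℝ) + δ y) := by push_cast; ring
        have e2 : ((⌊ν x⌋ - ⌊ν y⌋ : ℤ) : ℝ) + (Int.fract (ν x) - Int.fract (ν y))
            = ν x - ν y := by
          push_cast
          linarith [Int.floor_add_fract (ν x), Int.floor_add_fract (ν y)]
        rw [e1, e2] at base
        exact base
  · intro x
    rcases Nat.eq_zero_or_pos (j x) with h0 | h1
    · have : δ x = 0 := by rw [hδ]; simp only; rw [h0]; simp
      refine ⟨⌊ν x⌋, Or.inl ?_⟩
      rw [hν']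
      simp only
      rw [this, add_zero]
    · refine ⟨⌊ν x⌋, Or.inr ⟨?_, ?_⟩⟩
      · rw [hν']
        simp only
        have := δ_ge x h1
        linarith [this, hε]
      · rw [hν']
        simp only
        have := δ_le x
        rw [hkK] at this
        linarith [hε]
  · intro x y
    rcases lt_trichotomy (j x) (j y) with hxy | hxy | hxy
    · refine ⟨⌊ν x⌋ - ⌊ν y⌋ - 1, Or.inr ⟨?_, ?_⟩⟩
      · have hd : 1/((k:ℝ)+1) ≤ δ y - δ x := by
          rw [hδ]
          simp only
          rw [div_sub_div_same]
          have h1 : (1:ℝ) ≤ (j y : ℝ) - (j x : ℝ) := by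
            have h2 : j x + 1 ≤ j y := hxy
            have h3 : ((j x : ℝ)) + 1 ≤ (j y : ℝ) := by exact_mod_cast h2
            linarith
          exact div_le_div_of_nonneg_right h1 hK.le
        have hup : δ y - δ x ≤ (k:ℝ)/((k:ℝ)+1) := by
          linarith [δ_le y, δ_nonneg x]
        rw [hν']
        simp only
        push_cast
        rw [hkK] at hup
        have h1K : ε ≤ 1/((k:ℝ)+1) := hε
        linarith
      · have hd : 1/((k:ℝ)+1) ≤ δ y - δ x := by
          rw [hδ]
          simp only
          rw [div_sub_div_same]
          have h1 : (1:ℝ) ≤ (j y : ℝ) - (j x : ℝ) := by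
            have h2 : j x + 1 ≤ j y := hxy
            have h3 : ((j x : ℝ)) + 1 ≤ (j y : ℝ) := by exact_mod_cast h2
            linarith
          exact div_le_div_of_nonneg_right h1 hK.le
        rw [hν']
        simp only
        push_cast
        linarith [hε]
    · refine ⟨⌊ν x⌋ - ⌊ν y⌋, Or.inl ?_⟩
      have : δ x = δ y := by rw [hδ]; simp only; rw [hxy]
      rw [hν']
      simp only
      push_cast
      linarith
    · refine ⟨⌊ν x⌋ - ⌊ν y⌋, Or.inr ⟨?_, ?_⟩⟩
      · have hd : 1/((k:ℝ)+1) ≤ δ x - δ y := by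
          rw [hδ]
          simp only
          rw [div_sub_div_same]
          have h1 : (1:ℝ) ≤ (j x : ℝ) - (j y : ℝ) := by
            have h2 : j y + 1 ≤ j x := hxy
            have h3 : ((j y : ℝ)) + 1 ≤ (j x : ℝ) := by exact_mod_cast h2
            linarith
          exact div_le_div_of_nonneg_right h1 hK.le
        rw [hν']
        simp only
        push_cast
        linarith [hε]
      · have hup : δ x - δ y ≤ (k:ℝ)/((k:ℝ)+1) := by
          linarith [δ_le x, δ_nonneg y]
        rw [hν']
        simp only
        push_cast
        rw [hkK] at hup
        linarith [hε]

end UICD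
namespace UICD

open TimedAutomaton

noncomputable section

open Classical

variable {S G Loc : Type} {k : ℕ}

def TrF (μ : Fin k → ℝ) (t0 : ℤ) (β : Fin k → Bool) (φ : ClockConstraint (Fin k)) :
    ClockConstraint (Fin k) :=
  .and (Tr μ t0 β φ) (EQc β)

def primeAut (B : TimedAutomaton (S ⊕ Unit ⊕ G) Loc (Fin k)) (qbar : Loc)
    (μ : Fin k → ℝ) (t0 : ℤ) : TimedAutomaton G (Loc × (Fin k → Bool)) (Fin k) where
  init := {(qbar, fun _ => false)}
  final := {pb | pb.1 ∈ B.final}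
  rules := {r | ∃ (p : Loc) (β : Fin k → Bool) (b : G) (φ : ClockConstraint (Fin k))
    (Y : Set (Fin k)) (q : Loc),
    (p, Sum.inr (Sum.inr b), φ, Y, q) ∈ B.rules ∧
    r = ((p, β), b, TrF μ t0 β φ, Y, (q, fun x => if x ∈ Y then true else β x))}

lemma mem_primeAut_rules {B : TimedAutomaton (S ⊕ Unit ⊕ G) Loc (Fin k)} {qbar : Loc}
    {μ : Fin k → ℝ} {t0 : ℤ} {r} :
    r ∈ (primeAut B qbar μ t0).rules ↔ ∃ (p : Loc) (β : Fin k → Bool) (b : G)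
      (φ : ClockConstraint (Fin k)) (Y : Set (Fin k)) (q : Loc),
    (p, Sum.inr (Sum.inr b), φ, Y, q) ∈ B.rules ∧
    r = ((p, β), b, TrF μ t0 β φ, Y, (q, fun x => if x ∈ Y then true else β x)) :=
  Iff.rfl

def Fc (μ : Fin k → ℝ) (t0 : ℤ) (c' : TAConfig (Loc × (Fin k → Bool)) (Fin k)) :
    TAConfig Loc (Fin k) :=
  (c'.1.1, fun x => if c'.1.2 x then c'.2.1 x + t0 else μ x, c'.2.2 + t0)

def goodCfg (ε : ℝ) (c' : TAConfig (Loc × (Fin k → Bool)) (Fin k)) : Prop :=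
  (∀ x, c'.1.2 x = false → c'.2.1 x = 0) ∧ Gd ε c'.2.2 ∧ (∀ x, Gd ε (c'.2.1 x))

lemma sat_TrF_iff {μ : Fin k → ℝ} {t0 : ℤ} {ε : ℝ} (hε0 : 0 < ε) (hε1 : ε ≤ 1)
    (hμ : ∀ x, Int.fract (μ x) < ε) (β : Fin k → Bool) (ν : Fin k → ℝ) (s2 : ℝ)
    (hold : ∀ x, β x = false → ν x = 0) (hs2 : Gd ε s2) (hν : ∀ x, Gd ε (ν x))
    (φ : ClockConstraint (Fin k)) :
    ClockConstraint.sat (fun x => s2 - ν x) (TrF μ t0 β φ) ↔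
      ClockConstraint.sat (fun x => (s2 + t0) - (if β x then ν x + t0 else μ x)) φ := by
  have ha : ∀ x y, β x = false → β y = false →
      (fun x => s2 - ν x) x = (fun x => s2 - ν x) y := by
    intro x y hx hy
    simp only
    rw [hold x hx, hold y hy]
  have hb : ∀ x, β x = false → Gd ε ((fun x => s2 - ν x) x) := by
    intro x hx
    simp only
    rw [hold x hx, sub_zero]
    exact hs2
  have hc : ∀ x y, β x = false → β y = true →
      Gd ε ((fun x => s2 - ν x) x - (fun x => s2 - ν x) y) := by
    intro x y hx _
    simp only
    rw [hold x hx]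
    rw [show s2 - 0 - (s2 - ν y) = ν y by ring]
    exact hν y
  have hc' : ∀ x y, β x = true → β y = false →
      Gd ε ((fun x => s2 - ν x) x - (fun x => s2 - ν x) y) := by
    intro x y _ hy
    simp only
    rw [hold y hy]
    rw [show s2 - ν x - (s2 - 0) = -(ν x) by ring]
    exact (hν x).neg
  have key := Tr_correct (μ := μ) (t0 := t0) hε0 hε1 hμ β (fun x => s2 - ν x) ha hb hc hc' φ
  have hEQ : ClockConstraint.sat (fun x => s2 - ν x) (EQc β) := by
    rw [sat_EQc]
    exact ha
  have hfun : (fun x => if β x then (fun x => s2 - ν x) x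
      else (fun x => s2 - ν x) x + ((t0:ℝ) - μ x)) =
      (fun x => (s2 + t0) - (if β x then ν x + t0 else μ x)) := by
    funext x
    cases hβ : β x with
    | true => simp only [if_pos]; ring
    | false =>
        simp only [Bool.false_eq_true, if_false]
        rw [hold x hβ]
        ring
  constructor
  · rintro ⟨h1, _⟩
    rw [← hfun]
    exact key.mp h1
  · intro h
    refine ⟨key.mpr ?_, hEQ⟩
    rw [hfun]
    exact h

section corr

variable {B : TimedAutomaton (S ⊕ Unit ⊕ G) Loc (Fin k)} {qbar : Loc}
  {μ : Fin k → ℝ} {t0 : ℤ} {ε : ℝ}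

lemma step_fwd (hε0 : 0 < ε) (hε1 : ε ≤ 1) (hμ : ∀ x, Int.fract (μ x) < ε)
    {c' d' : TAConfig (Loc × (Fin k → Bool)) (Fin k)} {e : G × ℝ}
    (hg : goodCfg ε c') (he : Gd ε e.2)
    (h : (primeAut B qbar μ t0).Step c' e d') :
    B.Step (Fc μ t0 c') (Sum.inr (Sum.inr e.1), e.2 + t0) (Fc μ t0 d') ∧
      goodCfg ε d' := by
  obtain ⟨ht, hle, ψ, Yr, hrule, hsat, hres, hres'⟩ := h
  obtain ⟨p, β, b, φ, Y, q, hBrule, req⟩ := mem_primeAut_rules.mp hrule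
  obtain ⟨⟨pc, βc⟩, ν, s⟩ := c'
  obtain ⟨⟨pd, βd⟩, ν2, s2⟩ := d'
  simp only [Prod.mk.injEq] at req
  obtain ⟨⟨hp1, hβ1⟩, he1, hψ, hY, ⟨hq1, hβd⟩⟩ := req
  subst hp1; subst hβ1; subst hψ; subst hY; subst hq1; subst hβd
  subst he1
  obtain ⟨hold, hgs, hgν⟩ := hg
  simp only at hold hgν ht hres hres'
  have hsat2 := (sat_TrF_iff hε0 hε1 hμ βc ν e.2 hold he hgν φ).mp hsat
  constructor
  · refine ⟨?_, ?_, φ, Yr, hBrule, ?_, ?_, ?_⟩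
    · show s2 + (t0:ℝ) = e.2 + t0
      rw [ht]
    · show s + (t0:ℝ) ≤ e.2 + t0
      have : s ≤ e.2 := hle
      linarith
    · exact hsat2
    · intro x hx
      show (if (if x ∈ Yr then true else βc x) = true then ν2 x + (t0:ℝ) else μ x) = e.2 + t0
      rw [if_pos hx, if_pos rfl, hres x hx]
    · intro x hx
      show (if (if x ∈ Yr then true else βc x) = true then ν2 x + (t0:ℝ) else μ x) =
        (if βc x = true then ν x + (t0:ℝ) else μ x)
      rw [if_neg hx, hres' x hx]
  · refine ⟨?_, ?_, ?_⟩
    · intro x hx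
      simp only at hx ⊢
      by_cases hxY : x ∈ Yr
      · rw [if_pos hxY] at hx; exact absurd hx (by simp)
      · rw [if_neg hxY] at hx
        rw [hres' x hxY]
        exact hold x hx
    · show Gd ε s2
      rw [ht]; exact he
    · intro x
      show Gd ε (ν2 x)
      by_cases hxY : x ∈ Yr
      · rw [hres x hxY]; exact he
      · rw [hres' x hxY]; exact hgν x

lemma step_bwd (hε0 : 0 < ε) (hε1 : ε ≤ 1) (hμ : ∀ x, Int.fract (μ x) < ε)
    {c' : TAConfig (Loc × (Fin k → Bool)) (Fin k)} {e : G × ℝ}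
    {d : TAConfig Loc (Fin k)}
    (hg : goodCfg ε c') (he : Gd ε e.2)
    (h : B.Step (Fc μ t0 c') (Sum.inr (Sum.inr e.1), e.2 + t0) d) :
    ∃ d', (primeAut B qbar μ t0).Step c' e d' ∧ Fc μ t0 d' = d ∧ goodCfg ε d' := by
  obtain ⟨⟨pc, βc⟩, ν, s⟩ := c'
  obtain ⟨d1, dres, dt⟩ := d
  obtain ⟨ht, hle, φ, Y, hBrule, hsat, hres, hres'⟩ := h
  obtain ⟨hold, hgs, hgν⟩ := hg
  simp only [Fc] at ht hle hres hres' hsat hBrule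
  simp only at hold hgν hgs
  have hsat2 := (sat_TrF_iff hε0 hε1 hμ βc ν e.2 hold he hgν φ).mpr hsat
  refine ⟨((d1, fun x => if x ∈ Y then true else βc x),
    fun x => if x ∈ Y then e.2 else ν x, e.2),
    ⟨rfl, ?_, TrF μ t0 βc φ, Y,
      mem_primeAut_rules.mpr ⟨pc, βc, e.1, φ, Y, d1, hBrule, rfl⟩, hsat2, ?_, ?_⟩, ?_, ?_, ?_, ?_⟩
  · show s ≤ e.2
    linarith
  · intro x hx
    show (if x ∈ Y then e.2 else ν x) = e.2
    rw [if_pos hx]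
  · intro x hx
    show (if x ∈ Y then e.2 else ν x) = ν x
    rw [if_neg hx]
  · show Fc μ t0 _ = (d1, dres, dt)
    simp only [Fc]
    refine Prod.ext rfl (Prod.ext ?_ ?_)
    · show (fun x => if (if x ∈ Y then true else βc x) = true
        then (if x ∈ Y then e.2 else ν x) + (t0:ℝ) else μ x) = dres
      funext x
      by_cases hxY : x ∈ Y
      · simp only [if_pos hxY, if_true]
        exact (hres x hxY).symm
      · simp only [if_neg hxY]
        exact (hres' x hxY).symm
    · show e.2 + (t0:ℝ) = dt
      exact ht.symm
  · intro x hx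
    simp only at hx ⊢
    by_cases hxY : x ∈ Y
    · rw [if_pos hxY] at hx; exact absurd hx (by simp)
    · rw [if_neg hxY] at hx
      rw [if_neg hxY]
      exact hold x hx
  · exact he
  · intro x
    show Gd ε (if x ∈ Y then e.2 else ν x)
    by_cases hxY : x ∈ Y
    · rw [if_pos hxY]; exact he
    · rw [if_neg hxY]; exact hgν x

lemma run_fwd (hε0 : 0 < ε) (hε1 : ε ≤ 1) (hμ : ∀ x, Int.fract (μ x) < ε)
    {c' d' : TAConfig (Loc × (Fin k → Bool)) (Fin k)} {w : List (G × ℝ)}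
    (h : (primeAut B qbar μ t0).Run c' w d') :
    goodCfg ε c' → (∀ p ∈ w, Gd ε p.2) →
    B.Run (Fc μ t0 c') (w.map (fun p => (Sum.inr (Sum.inr p.1), p.2 + t0))) (Fc μ t0 d')
      ∧ goodCfg ε d' := by
  induction h with
  | nil => exact fun hg _ => ⟨Run.nil _, hg⟩
  | @cons c1 c2 c3 e w hstep hrun ih =>
      intro hg hw
      obtain ⟨h1, hg1⟩ := step_fwd hε0 hε1 hμ hg (hw e (List.mem_cons_self)) hstep
      obtain ⟨h2, hg2⟩ := ih hg1 (fun p hp => hw p (List.mem_cons_of_mem e hp))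
      refine ⟨?_, hg2⟩
      rw [List.map_cons]
      exact Run.cons h1 h2

lemma run_bwd (hε0 : 0 < ε) (hε1 : ε ≤ 1) (hμ : ∀ x, Int.fract (μ x) < ε)
    (w : List (G × ℝ)) :
    ∀ {c' : TAConfig (Loc × (Fin k → Bool)) (Fin k)} {d : TAConfig Loc (Fin k)},
    goodCfg ε c' → (∀ p ∈ w, Gd ε p.2) →
    B.Run (Fc μ t0 c') (w.map (fun p => (Sum.inr (Sum.inr p.1), p.2 + t0))) d →
    ∃ d', (primeAut B qbar μ t0).Run c' w d' ∧ Fc μ t0 d' = d ∧ goodCfg ε d' := by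
  induction w with
  | nil =>
      intro c' d hg _ h
      rw [List.map_nil] at h
      cases h with
      | nil => exact ⟨c', Run.nil c', rfl, hg⟩
  | cons e w ih =>
      intro c' d hg hw h
      rw [List.map_cons] at h
      cases h with
      | cons hstep hrun =>
          obtain ⟨d1', hstep', hFd1, hg1⟩ := step_bwd hε0 hε1 hμ hg
            (hw e (List.mem_cons_self)) hstep
          rw [← hFd1] at hrun
          obtain ⟨d', hrun', hFd, hg2⟩ := ih hg1
            (fun p hp => hw p (List.mem_cons_of_mem e hp)) hrun
          exact ⟨d', Run.cons hstep' hrun', hFd, hg2⟩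

lemma primeAut_det (hdet : B.IsDeterministic) (hε0 : 0 < ε) (hε1 : ε ≤ 1)
    (hεk : ε ≤ 1/((k:ℝ)+1)) (hμ : ∀ x, Int.fract (μ x) < ε) :
    (primeAut B qbar μ t0).IsDeterministic := by
  constructor
  · exact ⟨(qbar, fun _ => false), rfl, fun p hp => hp⟩
  · rintro pb a ψ Yr q ψ' Yr' q' hr1 hr2 ⟨ν0, hs1, hs2⟩
    obtain ⟨p1, β1, b1, φ1, Y1, q1, hB1, req1⟩ := mem_primeAut_rules.mp hr1
    obtain ⟨p2, β2, b2, φ2, Y2, q2, hB2, req2⟩ := mem_primeAut_rules.mp hr2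
    simp only [Prod.mk.injEq] at req1 req2
    obtain ⟨hpb1, ha1, hψ1, hY1, hq1⟩ := req1
    obtain ⟨hpb2, ha2, hψ2, hY2, hq2⟩ := req2
    have hp12 : p1 = p2 := by rw [hpb1] at hpb2; exact (Prod.mk.injEq _ _ _ _ ▸ hpb2).1
    have hβ12 : β1 = β2 := by rw [hpb1] at hpb2; exact (Prod.mk.injEq _ _ _ _ ▸ hpb2).2
    have hb12 : b1 = b2 := by rw [ha1] at ha2; exact ha2
    subst hp12; subst hβ12; subst hb12
    obtain ⟨ν', hsat_iff, hGd1, hGd2⟩ := rank_squeeze ν0 hε0 hεk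
    rw [hψ1] at hs1
    rw [hψ2] at hs2
    have hs1' : ClockConstraint.sat ν' (TrF μ t0 β1 φ1) := (hsat_iff _).mpr hs1
    have hs2' : ClockConstraint.sat ν' (TrF μ t0 β1 φ2) := (hsat_iff _).mpr hs2
    obtain ⟨hTr1, hEQ1⟩ := hs1'
    obtain ⟨hTr2, _⟩ := hs2'
    have hacond : ∀ x y, β1 x = false → β1 y = false → ν' x = ν' y :=
      (sat_EQc β1 ν').mp hEQ1
    have key1 := (Tr_correct hε0 hε1 hμ β1 ν' hacond (fun x _ => hGd1 x)
      (fun x y _ _ => hGd2 x y) (fun x y _ _ => hGd2 x y) φ1).mp hTr1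
    have key2 := (Tr_correct hε0 hε1 hμ β1 ν' hacond (fun x _ => hGd1 x)
      (fun x y _ _ => hGd2 x y) (fun x y _ _ => hGd2 x y) φ2).mp hTr2
    obtain ⟨hYeq, hqeq⟩ := hdet.2 _ _ _ _ _ _ _ _ hB1 hB2 ⟨_, key1, key2⟩
    subst hYeq; subst hqeq
    exact ⟨hY1.trans hY2.symm, hq1.trans hq2.symm⟩

end corr

end

end UICD
namespace UICD

open TimedAutomaton

open Classical

lemma foldr_max_le (l : List ℝ) : ∀ x ∈ l, x ≤ l.foldr max 0 := by
  induction l with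
  | nil => intro x hx; simp at hx
  | cons a l ih =>
      intro x hx
      rcases List.mem_cons.mp hx with rfl | hx
      · exact le_max_left _ _
      · exact (ih x hx).trans (le_max_right _ _)

lemma foldr_max_nonneg (l : List ℝ) : 0 ≤ l.foldr max 0 := by
  induction l with
  | nil => simp
  | cons a l ih => exact ih.trans (le_max_right _ _)

lemma cw_mapTW {A B : Type*} {π : ℝ → ℝ} (hπ : IsZA π) (t0 : ℤ)
    (v : List (A × ℝ)) (m : List (B × ℝ)) :
    mapTW π (cw v (t0:ℝ) m) = cw (mapTW π v) (t0:ℝ) (mapTW π m) := by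
  rw [cw, cw, mapTW_append, mapTW_cons]
  congr 1
  · simp only [mapTW, encL, List.map_map]
    rfl
  · congr 1
    · show ((dollar ((t0:ℝ)) : (A ⊕ Unit ⊕ B) × ℝ).1, π (t0:ℝ)) = dollar (t0:ℝ)
      rw [hπ.map_int]
      rfl
    · simp only [mapTW, encR, List.map_map]
      apply List.map_congr_left
      intro p _
      simp only [Function.comp_apply]
      refine Prod.ext rfl ?_
      show π (p.2 + (t0:ℝ)) = π p.2 + (t0:ℝ)
      exact hπ.add_int p.2 t0

lemma cw_split {A B : Type*} (v : List (A × ℝ)) (t : ℝ) (m : List (B × ℝ)) :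
    (cw v t m : List ((A ⊕ Unit ⊕ B) × ℝ)) = (encL v ++ [dollar t]) ++ encR t m := by
  rw [cw, List.append_assoc, List.singleton_append]

theorem main_backward (k : ℕ)
    (Sg Gm : Type)
    (L : Set (List (Sg × ℝ))) (M : Set (List (Gm × ℝ)))
    (hLsub : L ⊆ TW Sg) (hMsub : M ⊆ TW Gm)
    (hMnotk : ¬ RecognisableByDTA k M)
    (hrec : RecognisableByDTA k (compLang L (TW Gm) ∪ compLang (TW Sg) M)) :
    L = TW Sg := by
  by_contra hne
  -- a timed word outside L
  obtain ⟨u, huTW, huL⟩ : ∃ u, u ∈ TW Sg ∧ u ∉ L := by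
    by_contra h
    push_neg at h
    exact hne (Set.Subset.antisymm hLsub (fun w hw => h w hw))
  obtain ⟨Loc, instLoc, B, hBdet, hBlang⟩ := hrec
  haveI : Finite Loc := instLoc
  -- the time of the separator
  set T : ℝ := (u.map Prod.snd).foldr max 0 with hT
  set t0 : ℤ := ⌈T⌉ with ht0
  have hTt0 : T ≤ (t0:ℝ) := Int.le_ceil T
  have ht0nn : (0:ℝ) ≤ (t0:ℝ) := le_trans (foldr_max_nonneg _) hTt0
  have hstu : ∀ p ∈ u, p.2 ≤ (t0:ℝ) := fun p hp =>
    le_trans (foldr_max_le _ p.2 (List.mem_map_of_mem (f := Prod.snd) hp)) hTt0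
  -- the slack
  set ε : ℝ := 1/(4*((k:ℝ)+1)) with hε
  have hden : (0:ℝ) < 4*((k:ℝ)+1) := by positivity
  have hε0 : 0 < ε := by rw [hε]; positivity
  have hε4 : ε ≤ 1/4 := by
    rw [hε]
    apply one_div_le_one_div_of_le (by norm_num)
    have : (0:ℝ) ≤ (k:ℝ) := Nat.cast_nonneg k
    linarith
  have hε1 : ε ≤ 1 := by linarith
  have hεlt1 : ε < 1 := by linarith
  have hεk : ε ≤ 1/((k:ℝ)+1) := by
    rw [hε]
    apply one_div_le_one_div_of_le (by positivity)
    have : (0:ℝ) ≤ (k:ℝ) := Nat.cast_nonneg k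
    linarith
  -- M is not everything
  have hMne : M ≠ TW Gm := fun h => hMnotk (h ▸ recognisable_TW Gm k)
  -- the quotient computation
  have hquot : ∀ (v : List (Sg × ℝ)), v ∈ TW Sg → (∀ p ∈ v, p.2 ≤ (t0:ℝ)) →
      ∀ m, (cw v (t0:ℝ) m ∈ B.Lang ↔ m ∈ (if v ∈ L then TW Gm else M)) := by
    intro v hv hvs m
    rw [hBlang]
    exact mem_N_iff hMsub hv ht0nn hvs m
  -- the crucial family property
  have hfam : ∀ π : ℝ → ℝ, IsZA π →
      (mapTW π u ∉ L ∧ ∀ m, (mapTW π m ∈ M ↔ m ∈ M)) := by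
    intro π hπ
    have hπuTW : mapTW π u ∈ TW Sg := mapTW_TW hπ huTW
    have hπus : ∀ p ∈ mapTW π u, p.2 ≤ (t0:ℝ) := by
      rintro p hp
      obtain ⟨p', hp', rfl⟩ := List.mem_map.mp hp
      show π p'.2 ≤ (t0:ℝ)
      calc π p'.2 ≤ π (t0:ℝ) := hπ.strictMono.monotone (hstu p' hp')
        _ = (t0:ℝ) := hπ.map_int t0
    have hmain : ∀ m, (mapTW π m ∈ (if mapTW π u ∈ L then TW Gm else M) ↔ m ∈ M) := by
      intro m
      rw [← hquot (mapTW π u) hπuTW hπus (mapTW π m)]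
      rw [← cw_mapTW hπ t0 u m]
      rw [← lang_map_iff hπ]
      rw [hquot u huTW hstu m, if_neg huL]
    by_cases hc : mapTW π u ∈ L
    · exfalso
      apply hMne
      apply Set.Subset.antisymm hMsub
      intro m hm
      have h1 := hmain m
      rw [if_pos hc] at h1
      exact h1.mp (mapTW_TW hπ hm)
    · refine ⟨hc, fun m => ?_⟩
      have h1 := hmain m
      rwa [if_neg hc] at h1
  have hMinv : ∀ σ : ℝ → ℝ, IsZA σ → ∀ m, (mapTW σ m ∈ M ↔ m ∈ M) :=
    fun σ hσ => (hfam σ hσ).2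
  -- squeeze the word u
  obtain ⟨πs, hπs, hπsfr⟩ := squeeze_low (u.map Prod.snd) hε0 hεlt1
  set us : List (Sg × ℝ) := mapTW πs u with hus
  have husTW : us ∈ TW Sg := mapTW_TW hπs huTW
  have husL : us ∉ L := (hfam πs hπs).1
  have husst : ∀ p ∈ us, p.2 ≤ (t0:ℝ) := by
    rintro p hp
    obtain ⟨p', hp', rfl⟩ := List.mem_map.mp hp
    show πs p'.2 ≤ (t0:ℝ)
    calc πs p'.2 ≤ πs (t0:ℝ) := hπs.strictMono.monotone (hstu p' hp')
      _ = (t0:ℝ) := hπs.map_int t0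
  have hquotus : ∀ m, (cw us (t0:ℝ) m ∈ B.Lang ↔ m ∈ M) := by
    intro m
    rw [hquot us husTW husst m, if_neg husL]
  -- the initial location
  obtain ⟨p0, hp0, hp0u⟩ := hBdet.1
  -- run on the prefix
  by_cases hrun0 : ∃ c, B.Run (p0, fun _ => 0, 0)
      ((encL us ++ [dollar (t0:ℝ)]) : List ((Sg ⊕ Unit ⊕ Gm) × ℝ)) c
  case neg =>
    -- then M is empty
    have hMempty : M = (∅ : Set (List (Gm × ℝ))) := by
      ext m
      simp only [Set.mem_empty_iff_false, iff_false]
      intro hm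
      have := (hquotus m).mpr hm
      obtain ⟨p1, hp1, cend, hrunfull, _⟩ := this
      have hpp : p1 = p0 := hp0u p1 hp1
      subst hpp
      rw [cw_split] at hrunfull
      obtain ⟨cmid, hpre, _⟩ := run_append_iff.mp hrunfull
      exact hrun0 ⟨cmid, hpre⟩
    rw [hMempty] at hMnotk
    exact hMnotk (recognisable_empty Gm k)
  case pos =>
    obtain ⟨⟨qbar, μ, tend⟩, hrun0⟩ := hrun0
    have htend : tend = (t0:ℝ) := run_end_time hrun0
    subst htend
    -- reset points have small fractional parts
    have hμfr : ∀ x, Int.fract (μ x) < ε := by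
      intro x
      rcases run_resets hrun0 x with h | ⟨p, hp, h⟩
      · have h' : μ x = 0 := h
        rw [h', Int.fract_zero]
        exact hε0
      · have h' : μ x = p.2 := h
        rcases List.mem_append.mp hp with hp | hp
        · obtain ⟨p', hp', rfl⟩ := List.mem_map.mp hp
          obtain ⟨p'', hp'', rfl⟩ := List.mem_map.mp hp'
          rw [h']
          exact hπsfr p''.2 (List.mem_map_of_mem (f := Prod.snd) hp'')
        · rcases List.mem_cons.mp hp with rfl | hp
          · rw [h']
            show Int.fract ((t0:ℝ)) < ε
            rw [Int.fract_intCast]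
            exact hε0
          · simp at hp
    -- the derived automaton
    set B' := primeAut B qbar μ t0 with hB'
    have hgood0 : goodCfg ε (((qbar, fun _ => false) : Loc × (Fin k → Bool)),
        fun _ => (0:ℝ), (0:ℝ)) :=
      ⟨fun _ _ => rfl, Gd.zero ε, fun _ => Gd.zero ε⟩
    have hFc0 : Fc μ t0 (((qbar, fun _ => false) : Loc × (Fin k → Bool)),
        fun _ => (0:ℝ), (0:ℝ)) = (qbar, μ, (t0:ℝ)) := by
      simp only [Fc]
      refine Prod.ext rfl (Prod.ext ?_ (zero_add _))
      funext x
      simp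
    have hemb : ∀ m : List (Gm × ℝ),
        (m.map (fun p => ((Sum.inr (Sum.inr p.1) : Sg ⊕ Unit ⊕ Gm), p.2 + (t0:ℝ))))
          = encR (t0:ℝ) m := fun m => rfl
    have hkey : ∀ m : List (Gm × ℝ), (∀ p ∈ m, Gd ε p.2) → (m ∈ B'.Lang ↔ m ∈ M) := by
      intro m hm
      rw [← hquotus m]
      constructor
      · rintro ⟨pb, hpb, c', hrun', hfin⟩
        have hpb' : pb = ((qbar, fun _ => false) : Loc × (Fin k → Bool)) := hpb
        subst hpb'
        obtain ⟨hBrun, _⟩ := run_fwd hε0 hε1 hμfr hrun' hgood0 hm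
        rw [hFc0, hemb] at hBrun
        refine ⟨p0, hp0, Fc μ t0 c', ?_, hfin⟩
        rw [cw_split]
        exact run_append_iff.mpr ⟨(qbar, μ, (t0:ℝ)), hrun0, hBrun⟩
      · rintro ⟨p1, hp1, cend, hrunfull, hfin⟩
        have hpp : p1 = p0 := hp0u p1 hp1
        subst hpp
        rw [cw_split] at hrunfull
        obtain ⟨cmid, hpre, hsuf⟩ := run_append_iff.mp hrunfull
        have hcm : cmid = (qbar, μ, (t0:ℝ)) := run_det hBdet hpre hrun0
        subst hcm
        rw [← hFc0, ← hemb] at hsuf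
        obtain ⟨d', hrun', hFd, _⟩ := run_bwd hε0 hε1 hμfr m hgood0 hm hsuf
        refine ⟨(qbar, fun _ => false), rfl, d', hrun', ?_⟩
        show d'.1.1 ∈ B.final
        have hc1 : (Fc μ t0 d').1 = cend.1 := congrArg Prod.fst hFd
        rw [← hc1] at hfin
        exact hfin
    have hMeq : B'.Lang = M := by
      ext m
      by_cases hmTW : m ∈ TW Gm
      · obtain ⟨σ, hσ, hσm⟩ := squeeze_mid (m.map Prod.snd) hε0 hε4
        have hgd : ∀ p ∈ mapTW σ m, Gd ε p.2 := by
          rintro p hp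
          obtain ⟨p', hp', rfl⟩ := List.mem_map.mp hp
          exact hσm p'.2 (List.mem_map_of_mem (f := Prod.snd) hp')
        rw [lang_map_iff hσ (w := m), ← hMinv σ hσ m]
        exact hkey _ hgd
      · constructor
        · intro h
          exact absurd (mem_lang_isTimedWord h) hmTW
        · intro h
          exact absurd (hMsub h) hmTW
    exact hMnotk ⟨Loc × (Fin k → Bool), inferInstance, B',
      primeAut_det hBdet hε0 hε1 hεk hμfr, hMeq⟩

end UICD
open UICD in
/-- Let `Y` be a class of timed languages containing all timeless languages, closed
under union and composition, and containing some language `M` not recognised by any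
`k`-clock DTA. Then for `L ∈ Y` over `Σ`, with `N := (L ▷ {$} ▷ TW Γ) ∪ (TW Σ ▷ {$} ▷ M)`:
`L = TW Σ` iff `N` is recognised by a deterministic timed automaton with `k` clocks. -/
theorem universality_iff_composition_deterministic (k : ℕ)
    (Y : (A : Type) → Set (Set (List (A × ℝ))))
    (hYtw : ∀ (A : Type) (L : Set (List (A × ℝ))), L ∈ Y A → L ⊆ TW A)
    (h1 : ∀ (A : Type) (L : Set (List (A × ℝ))), Timeless L → L ∈ Y A)
    (h2union : ∀ (A : Type) (L L' : Set (List (A × ℝ))),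
      L ∈ Y A → L' ∈ Y A → L ∪ L' ∈ Y A)
    (h2comp : ∀ (A B : Type) (L : Set (List (A × ℝ))) (M : Set (List (B × ℝ))),
      L ∈ Y A → M ∈ Y B → compLang L M ∈ Y (A ⊕ Unit ⊕ B))
    (Sg Gm : Type) (instSg : Finite Sg) (instGm : Finite Gm)
    (L : Set (List (Sg × ℝ))) (M : Set (List (Gm × ℝ)))
    (hL : L ∈ Y Sg) (hM : M ∈ Y Gm)
    (hMnotk : ¬ RecognisableByDTA k M) :
    L = TW Sg ↔
      RecognisableByDTA k (compLang L (TW Gm) ∪ compLang (TW Sg) M) := by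
  constructor
  · intro hLTW
    subst hLTW
    have habs : compLang (TW Sg) (TW Gm) ∪ compLang (TW Sg) M
        = compLang (TW Sg) (TW Gm) :=
      Set.union_eq_self_of_subset_right (compLang_mono_right (hYtw Gm M hM))
    rw [habs]
    exact ⟨Bool, inferInstance, shapeAut Sg Gm k, shapeAut_det Sg Gm k, shape_lang Sg Gm k⟩
  · exact main_backward k Sg Gm L M (hYtw Sg L hL) (hYtw Gm M hM) hMnotk
end
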